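/- arXiv:2604.26204 — 8 statements merged into one kernel-verified Lean document; each statement's English description precedes it below -/
import Mathlib

section
/- Let χ ∈ ℚ and for i = 1, 2 let v_i = (r_i, d_iH + k_if + D_i, a_i) with r_i ≠ 0, d_i, k_i ∈ ℚ and D_i ∈ N, and assume r₂d₁ = r₁d₂. Set v := v₁ + v₂, r := r₁ + r₂ and D := D₁ + D₂. Then −(D,D) + ⟨v,v⟩ + r²χ = r·((−(D₁,D₁) + ⟨v₁,v₁⟩ + r₁²χ)/r₁ + (−(D₂,D₂) + ⟨v₂,v₂⟩ + r₂²χ)/r₂). -/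
/-- With `ξᵢ = dᵢH + kᵢf + Dᵢ`, `Dᵢ ∈ N = {D : (D·f) = (D·H) = 0}`, `rᵢ ≠ 0`
and `r₂d₁ = r₁d₂`, setting `v := v₁ + v₂`, `r := r₁ + r₂`, `D := D₁ + D₂`:
`−(D,D) + ⟨v,v⟩ + r²χ
  = r·((−(D₁,D₁) + ⟨v₁,v₁⟩ + r₁²χ)/r₁ + (−(D₂,D₂) + ⟨v₂,v₂⟩ + r₂²χ)/r₂)`,
where the Mukai square of `(r, ξ, a)` is `(ξ·ξ) − 2ra`. -/
theorem stmt1 {V : Type*} [AddCommGroup V] [Module ℚ V] [FiniteDimensional ℚ V]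
    (B : V →ₗ[ℚ] V →ₗ[ℚ] ℚ) (hB : ∀ x y : V, B x y = B y x)
    (H f : V) (hHH : B H H = 0) (hff : B f f = 0) (hHf : B H f = 1)
    (χ r₁ r₂ d₁ d₂ k₁ k₂ a₁ a₂ : ℚ) (D₁ D₂ : V)
    (hr₁ : r₁ ≠ 0) (hr₂ : r₂ ≠ 0)
    (hD₁f : B D₁ f = 0) (hD₁H : B D₁ H = 0)
    (hD₂f : B D₂ f = 0) (hD₂H : B D₂ H = 0)
    (hd : r₂ * d₁ = r₁ * d₂) :
    let ξ₁ : V := d₁ • H + k₁ • f + D₁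
    let ξ₂ : V := d₂ • H + k₂ • f + D₂
    let r : ℚ := r₁ + r₂
    let a : ℚ := a₁ + a₂
    let D : V := D₁ + D₂
    (-(B D D) + (B (ξ₁ + ξ₂) (ξ₁ + ξ₂) - 2 * r * a) + r ^ 2 * χ
      = r * ((-(B D₁ D₁) + (B ξ₁ ξ₁ - 2 * r₁ * a₁) + r₁ ^ 2 * χ) / r₁
           + (-(B D₂ D₂) + (B ξ₂ ξ₂ - 2 * r₂ * a₂) + r₂ ^ 2 * χ) / r₂)) := by
  intro ξ₁ ξ₂ r a D
  have hfH : B f H = 1 := by rw [hB]; exact hHf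
  have hHD₁ : B H D₁ = 0 := by rw [hB]; exact hD₁H
  have hHD₂ : B H D₂ = 0 := by rw [hB]; exact hD₂H
  have hfD₁ : B f D₁ = 0 := by rw [hB]; exact hD₁f
  have hfD₂ : B f D₂ = 0 := by rw [hB]; exact hD₂f
  have h12 : B D₁ D₂ = B D₂ D₁ := hB _ _
  simp only [ξ₁, ξ₂, r, a, D, map_add, map_smul, LinearMap.add_apply, LinearMap.smul_apply,
    hHH, hff, hHf, hfH, hHD₁, hHD₂, hfD₁, hfD₂, hD₁f, hD₁H, hD₂f, hD₂H, smul_eq_mul]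
  field_simp
  linear_combination (k₁*r₁*r₂^2 + k₁*r₁^2*r₂ - 2*k₁*r₂ + 2*k₂*r₁ - k₂*r₁*r₂^2 - k₂*r₁^2*r₂ + r₁*r₂*(r₁+r₂)*(k₂-k₁)) * hd
end

section
/- Let χ ∈ ℚ and for i = 1, 2 let v_i = (r_i, d_iH + k_if + D_i, a_i) with r_i > 0, d_i, k_i ∈ ℚ and D_i ∈ N. Assume r₂d₁ = r₁d₂, (D_i, D_i) ≤ 0 and ⟨v_i, v_i⟩ ≥ −r_i²χ for i = 1, 2. Set v := v₁ + v₂, r := r₁ + r₂ and D := D₁ + D₂. Then |r₁²((D,D) − ⟨v,v⟩) − r²((D₁,D₁) − ⟨v₁,v₁⟩)| ≤ r²(−(D,D) + ⟨v,v⟩ + r²χ). -/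
lemma aux2 (χ r₁ r₂ d₁ d₂ k₁ k₂ a₁ a₂ P₁ PD : ℚ)
    (hr₁ : 0 < r₁) (hr₂ : 0 < r₂) (hd : r₂ * d₁ = r₁ * d₂)
    (hA : 0 ≤ r₁ ^ 2 * χ + 2 * d₁ * k₁ - 2 * r₁ * a₁)
    (hB2 : 0 ≤ r₂ ^ 2 * χ + 2 * d₂ * k₂ - 2 * r₂ * a₂) :
    |r₁ ^ 2 * (PD - (2 * (d₁ + d₂) * (k₁ + k₂) + PD - 2 * (r₁ + r₂) * (a₁ + a₂)))
        - (r₁ + r₂) ^ 2 * (P₁ - (2 * d₁ * k₁ + P₁ - 2 * r₁ * a₁))|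
      ≤ (r₁ + r₂) ^ 2 * (-PD + (2 * (d₁ + d₂) * (k₁ + k₂) + PD - 2 * (r₁ + r₂) * (a₁ + a₂))
          + (r₁ + r₂) ^ 2 * χ) := by
  have hrr : 0 < r₁ * r₂ := mul_pos hr₁ hr₂
  set A := r₁ ^ 2 * χ + 2 * d₁ * k₁ - 2 * r₁ * a₁ with hAdef
  set B2 := r₂ ^ 2 * χ + 2 * d₂ * k₂ - 2 * r₂ * a₂ with hBdef
  set E := r₁ ^ 2 * (PD - (2 * (d₁ + d₂) * (k₁ + k₂) + PD - 2 * (r₁ + r₂) * (a₁ + a₂)))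
        - (r₁ + r₂) ^ 2 * (P₁ - (2 * d₁ * k₁ + P₁ - 2 * r₁ * a₁)) with hE
  set F := (r₁ + r₂) ^ 2 * (-PD + (2 * (d₁ + d₂) * (k₁ + k₂) + PD - 2 * (r₁ + r₂) * (a₁ + a₂))
          + (r₁ + r₂) ^ 2 * χ) with hF
  rw [abs_le]
  have hq1 : 0 ≤ (r₁+r₂)^2 - r₁^2 := by nlinarith
  have hq2 : 0 ≤ (r₁+r₂)^2 - r₁*r₂ := by nlinarith
  constructor
  · have key : r₁ * r₂ * (E + F)
        = (r₁+r₂) * (r₂ * A * ((r₁+r₂)^2 + r₁*r₂) + r₁ * B2 * ((r₁+r₂)^2 - r₁^2)) := by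
      rw [hE, hF, hAdef, hBdef]
      linear_combination (-2*r₂^3*k₁ - 4*r₁*r₂^2*k₁ + 2*r₁*r₂^2*k₂ + 4*r₁^2*r₂*k₂) * hd
    have h1 : 0 ≤ (r₁+r₂) * (r₂ * A * ((r₁+r₂)^2 + r₁*r₂) + r₁ * B2 * ((r₁+r₂)^2 - r₁^2)) :=
      mul_nonneg (by positivity)
        (add_nonneg (mul_nonneg (mul_nonneg hr₂.le hA) (by positivity))
          (mul_nonneg (mul_nonneg hr₁.le hB2) hq1))
    have h2 : r₁ * r₂ * 0 ≤ r₁ * r₂ * (E + F) := by rw [key]; simpa using h1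
    have h3 : 0 ≤ E + F := le_of_mul_le_mul_left h2 hrr
    linarith
  · have key : r₁ * r₂ * (F - E)
        = (r₁+r₂) * (r₂ * A * ((r₁+r₂)^2 - r₁*r₂) + r₁ * B2 * ((r₁+r₂)^2 + r₁^2)) := by
      rw [hE, hF, hAdef, hBdef]
      linear_combination (-2*r₂^3*k₁ - 4*r₁*r₂^2*k₁ + 2*r₁*r₂^2*k₂ - 4*r₁^2*r₂*k₁ + 4*r₁^2*r₂*k₂ + 4*r₁^3*k₂) * hd
    have h1 : 0 ≤ (r₁+r₂) * (r₂ * A * ((r₁+r₂)^2 - r₁*r₂) + r₁ * B2 * ((r₁+r₂)^2 + r₁^2)) :=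
      mul_nonneg (by positivity)
        (add_nonneg (mul_nonneg (mul_nonneg hr₂.le hA) hq2)
          (mul_nonneg (mul_nonneg hr₁.le hB2) (by positivity)))
    have h2 : r₁ * r₂ * 0 ≤ r₁ * r₂ * (F - E) := by rw [key]; simpa using h1
    have h3 : 0 ≤ F - E := le_of_mul_le_mul_left h2 hrr
    linarith

/-- With `ξᵢ = dᵢH + kᵢf + Dᵢ`, `Dᵢ ∈ N`, `rᵢ > 0`, `r₂d₁ = r₁d₂`,
`(Dᵢ,Dᵢ) ≤ 0` and the Bogomolov bounds `⟨vᵢ,vᵢ⟩ ≥ −rᵢ²χ`:  with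
`v := v₁ + v₂`, `r := r₁ + r₂`, `D := D₁ + D₂`,
`|r₁²((D,D) − ⟨v,v⟩) − r²((D₁,D₁) − ⟨v₁,v₁⟩)| ≤ r²(−(D,D) + ⟨v,v⟩ + r²χ)`. -/
theorem stmt2 {V : Type*} [AddCommGroup V] [Module ℚ V] [FiniteDimensional ℚ V]
    (B : V →ₗ[ℚ] V →ₗ[ℚ] ℚ) (hB : ∀ x y : V, B x y = B y x)
    (H f : V) (hHH : B H H = 0) (hff : B f f = 0) (hHf : B H f = 1)
    (χ r₁ r₂ d₁ d₂ k₁ k₂ a₁ a₂ : ℚ) (D₁ D₂ : V)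
    (hr₁ : 0 < r₁) (hr₂ : 0 < r₂)
    (hD₁f : B D₁ f = 0) (hD₁H : B D₁ H = 0)
    (hD₂f : B D₂ f = 0) (hD₂H : B D₂ H = 0)
    (hd : r₂ * d₁ = r₁ * d₂)
    (hD₁neg : B D₁ D₁ ≤ 0) (hD₂neg : B D₂ D₂ ≤ 0)
    (hBog₁ : B (d₁ • H + k₁ • f + D₁) (d₁ • H + k₁ • f + D₁) - 2 * r₁ * a₁ ≥ -(r₁ ^ 2 * χ))
    (hBog₂ : B (d₂ • H + k₂ • f + D₂) (d₂ • H + k₂ • f + D₂) - 2 * r₂ * a₂ ≥ -(r₂ ^ 2 * χ)) :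
    let ξ₁ : V := d₁ • H + k₁ • f + D₁
    let ξ₂ : V := d₂ • H + k₂ • f + D₂
    let r : ℚ := r₁ + r₂
    let a : ℚ := a₁ + a₂
    let D : V := D₁ + D₂
    (|r₁ ^ 2 * (B D D - (B (ξ₁ + ξ₂) (ξ₁ + ξ₂) - 2 * r * a))
        - r ^ 2 * (B D₁ D₁ - (B ξ₁ ξ₁ - 2 * r₁ * a₁))|
      ≤ r ^ 2 * (-(B D D) + (B (ξ₁ + ξ₂) (ξ₁ + ξ₂) - 2 * r * a) + r ^ 2 * χ)) := by
  have hfH : B f H = 1 := (hB f H).trans hHf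
  have hfD₁ : B f D₁ = 0 := (hB f D₁).trans hD₁f
  have hHD₁ : B H D₁ = 0 := (hB H D₁).trans hD₁H
  have hfD₂ : B f D₂ = 0 := (hB f D₂).trans hD₂f
  have hHD₂ : B H D₂ = 0 := (hB H D₂).trans hD₂H
  have hD₂₁ : B D₂ D₁ = B D₁ D₂ := hB D₂ D₁
  have e₁ : B (d₁ • H + k₁ • f + D₁) (d₁ • H + k₁ • f + D₁)
      = 2 * d₁ * k₁ + B D₁ D₁ := by
    simp [hHH, hff, hHf, hfH, hD₁f, hD₁H, hfD₁, hHD₁]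
    ring
  have e₂ : B (d₂ • H + k₂ • f + D₂) (d₂ • H + k₂ • f + D₂)
      = 2 * d₂ * k₂ + B D₂ D₂ := by
    simp [hHH, hff, hHf, hfH, hD₂f, hD₂H, hfD₂, hHD₂]
    ring
  have eV : B ((d₁ • H + k₁ • f + D₁) + (d₂ • H + k₂ • f + D₂))
        ((d₁ • H + k₁ • f + D₁) + (d₂ • H + k₂ • f + D₂))
      = 2 * (d₁ + d₂) * (k₁ + k₂) + B (D₁ + D₂) (D₁ + D₂) := by
    simp [hHH, hff, hHf, hfH, hD₁f, hD₁H, hfD₁, hHD₁, hD₂f, hD₂H, hfD₂, hHD₂, hD₂₁]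
    ring
  intro ξ₁ ξ₂ r a D
  show |r₁ ^ 2 * (B (D₁ + D₂) (D₁ + D₂)
          - (B ((d₁ • H + k₁ • f + D₁) + (d₂ • H + k₂ • f + D₂))
              ((d₁ • H + k₁ • f + D₁) + (d₂ • H + k₂ • f + D₂)) - 2 * (r₁ + r₂) * (a₁ + a₂)))
        - (r₁ + r₂) ^ 2 * (B D₁ D₁
          - (B (d₁ • H + k₁ • f + D₁) (d₁ • H + k₁ • f + D₁) - 2 * r₁ * a₁))|
      ≤ (r₁ + r₂) ^ 2 * (-(B (D₁ + D₂) (D₁ + D₂))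
          + (B ((d₁ • H + k₁ • f + D₁) + (d₂ • H + k₂ • f + D₂))
              ((d₁ • H + k₁ • f + D₁) + (d₂ • H + k₂ • f + D₂)) - 2 * (r₁ + r₂) * (a₁ + a₂))
          + (r₁ + r₂) ^ 2 * χ)
  rw [eV, e₁]
  rw [e₁] at hBog₁
  rw [e₂] at hBog₂
  have hA : 0 ≤ r₁ ^ 2 * χ + 2 * d₁ * k₁ - 2 * r₁ * a₁ := by linarith
  have hB2 : 0 ≤ r₂ ^ 2 * χ + 2 * d₂ * k₂ - 2 * r₂ * a₂ := by linarith
  exact aux2 χ r₁ r₂ d₁ d₂ k₁ k₂ a₁ a₂ (B D₁ D₁) (B (D₁ + D₂) (D₁ + D₂)) hr₁ hr₂ hd hA hB2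
end

section
/- Assume in addition that (D, D) ≤ 0 for every D ∈ N (negative semidefiniteness on N). Let χ ∈ ℚ and let v_i = (r_i, ξ_i, a_i), i = 1, 2, with r_i > 0, (ξ₁·f)·r₂ = (ξ₂·f)·r₁, and ⟨v_i, v_i⟩ ≥ −r_i²χ for i = 1, 2. Set v := v₁ + v₂ and r := r₁ + r₂. Then 0 ≤ ⟨v₁,v₁⟩ + r₁²χ ≤ (r₁/r)·(⟨v,v⟩ + r²χ). (This is the Remark following the paper's Lemma on finiteness of the invariants (⟨v₁²⟩, D(v₁)).) -/
/-- Assuming the form is negative semidefinite on `N = {D : (D·f) = (D·H) = 0}`: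
for `vᵢ = (rᵢ, ξᵢ, aᵢ)` with `rᵢ > 0`, `(ξ₁·f)·r₂ = (ξ₂·f)·r₁` and the
Bogomolov bounds `⟨vᵢ,vᵢ⟩ ≥ −rᵢ²χ`, setting `v := v₁ + v₂`, `r := r₁ + r₂`,
one has `0 ≤ ⟨v₁,v₁⟩ + r₁²χ ≤ (r₁/r)·(⟨v,v⟩ + r²χ)`. -/
theorem stmt3 {V : Type*} [AddCommGroup V] [Module ℚ V] [FiniteDimensional ℚ V]
    (B : V →ₗ[ℚ] V →ₗ[ℚ] ℚ) (hB : ∀ x y : V, B x y = B y x)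
    (H f : V) (hHH : B H H = 0) (hff : B f f = 0) (hHf : B H f = 1)
    (hNneg : ∀ D : V, B D f = 0 → B D H = 0 → B D D ≤ 0)
    (χ r₁ r₂ a₁ a₂ : ℚ) (ξ₁ ξ₂ : V)
    (hr₁ : 0 < r₁) (hr₂ : 0 < r₂)
    (hd : B ξ₁ f * r₂ = B ξ₂ f * r₁)
    (hBog₁ : B ξ₁ ξ₁ - 2 * r₁ * a₁ ≥ -(r₁ ^ 2 * χ))
    (hBog₂ : B ξ₂ ξ₂ - 2 * r₂ * a₂ ≥ -(r₂ ^ 2 * χ)) :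
    0 ≤ (B ξ₁ ξ₁ - 2 * r₁ * a₁) + r₁ ^ 2 * χ ∧
    (B ξ₁ ξ₁ - 2 * r₁ * a₁) + r₁ ^ 2 * χ
      ≤ (r₁ / (r₁ + r₂)) *
          ((B (ξ₁ + ξ₂) (ξ₁ + ξ₂) - 2 * (r₁ + r₂) * (a₁ + a₂)) + (r₁ + r₂) ^ 2 * χ) := by
  have hfH : B f H = 1 := by rw [hB]; exact hHf
  set k : ℚ := r₂ * B ξ₁ H - r₁ * B ξ₂ H with hk
  set D : V := r₂ • ξ₁ - r₁ • ξ₂ - k • f with hDdef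
  have hwf : B (r₂ • ξ₁ - r₁ • ξ₂) f = 0 := by
    simp only [map_sub, map_smul, LinearMap.sub_apply, LinearMap.smul_apply, smul_eq_mul]
    nlinarith [hd]
  have hDf : B D f = 0 := by
    simp only [hDdef, map_sub, map_smul, LinearMap.sub_apply, LinearMap.smul_apply,
      smul_eq_mul, hff] at hwf ⊢
    nlinarith [hwf]
  have hDH : B D H = 0 := by
    simp only [hDdef, map_sub, map_smul, LinearMap.sub_apply, LinearMap.smul_apply,
      smul_eq_mul, hfH, hk]
    ring
  have hDD := hNneg D hDf hDH
  have hfw : B f (r₂ • ξ₁ - r₁ • ξ₂) = 0 := by rw [hB]; exact hwf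
  have hCS : r₂ ^ 2 * B ξ₁ ξ₁ - 2 * r₁ * r₂ * B ξ₁ ξ₂ + r₁ ^ 2 * B ξ₂ ξ₂ ≤ 0 := by
    have h21 : B ξ₂ ξ₁ = B ξ₁ ξ₂ := hB ξ₂ ξ₁
    have hf1 : B f ξ₁ = B ξ₁ f := hB f ξ₁
    have hf2 : B f ξ₂ = B ξ₂ f := hB f ξ₂
    simp only [hDdef, map_sub, map_smul, LinearMap.sub_apply, LinearMap.smul_apply,
      smul_eq_mul, hff, h21, hf1, hf2] at hDD hwf hfw
    have hkwf : k * (r₂ * B ξ₁ f - r₁ * B ξ₂ f) = 0 := by rw [hwf]; ring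
    nlinarith [hDD, hkwf]
  have hr : 0 < r₁ + r₂ := by linarith
  have hQ1 : 0 ≤ (B ξ₁ ξ₁ - 2 * r₁ * a₁) + r₁ ^ 2 * χ := by linarith
  refine ⟨hQ1, ?_⟩
  have hQ2 : 0 ≤ (B ξ₂ ξ₂ - 2 * r₂ * a₂) + r₂ ^ 2 * χ := by linarith
  have hexp : B (ξ₁ + ξ₂) (ξ₁ + ξ₂) = B ξ₁ ξ₁ + 2 * B ξ₁ ξ₂ + B ξ₂ ξ₂ := by
    have h21 : B ξ₂ ξ₁ = B ξ₁ ξ₂ := hB ξ₂ ξ₁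
    simp only [map_add, LinearMap.add_apply, h21]; ring
  rw [hexp, div_mul_eq_mul_div, le_div_iff₀ hr]
  set inner : ℚ :=
    (B ξ₁ ξ₁ + 2 * B ξ₁ ξ₂ + B ξ₂ ξ₂ - 2 * (r₁ + r₂) * (a₁ + a₂)) + (r₁ + r₂) ^ 2 * χ
    with hinner
  set Q1 : ℚ := (B ξ₁ ξ₁ - 2 * r₁ * a₁) + r₁ ^ 2 * χ with hQ1def
  set Q2 : ℚ := (B ξ₂ ξ₂ - 2 * r₂ * a₂) + r₂ ^ 2 * χ with hQ2def
  have key : r₂ * (r₁ * inner - Q1 * (r₁ + r₂)) =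
      r₁ * (r₁ + r₂) * Q2 -
        (r₂ ^ 2 * B ξ₁ ξ₁ - 2 * r₁ * r₂ * B ξ₁ ξ₂ + r₁ ^ 2 * B ξ₂ ξ₂) := by
    rw [hinner, hQ1def, hQ2def]; ring
  have hmul : 0 ≤ r₂ * (r₁ * inner - Q1 * (r₁ + r₂)) := by
    rw [key]
    have := mul_nonneg (mul_nonneg hr₁.le hr.le) hQ2
    linarith
  have := (mul_nonneg_iff_of_pos_left hr₂).mp hmul
  linarith
end

section
/- Let χ ∈ ℚ, μ > 0 rational, and let v = (r, dH + kf + D, a) and v₁ = (r₁, d₁H + k₁f + D₁, a₁) with D, D₁ ∈ N. Assume: 0 < r₁ < r; r·d₁ = r₁·d; (D₁, D₁) ≤ 0; ⟨v₁, v₁⟩ ≥ −r₁²χ; μ(r₁k − rk₁) ≥ 1; and −(D,D) + ⟨v,v⟩ + r²χ > 0. Then d/r − μ(−(D,D) + ⟨v,v⟩ + r²χ)/2 < (r₁a − ra₁)/(r₁k − rk₁). (This is the positive-rank case of the paper's Lemma locating the Gieseker chamber; in the paper μ is a positive integer with μH ∈ NS(X), so that μ(r₁k − rk₁) is a positive integer.)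 -/
set_option maxHeartbeats 800000


/-- Positive-rank case of the paper's Lemma locating the Gieseker chamber: with
`v = (r, dH + kf + D, a)`, `v₁ = (r₁, d₁H + k₁f + D₁, a₁)`, `D, D₁ ∈ N`,
`0 < r₁ < r`, `rd₁ = r₁d`, `(D₁,D₁) ≤ 0`, `⟨v₁,v₁⟩ ≥ −r₁²χ`,
`μ(r₁k − rk₁) ≥ 1` and `−(D,D) + ⟨v,v⟩ + r²χ > 0`, one has
`d/r − μ(−(D,D) + ⟨v,v⟩ + r²χ)/2 < (r₁a − ra₁)/(r₁k − rk₁)`. -/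
theorem stmt4 {V : Type*} [AddCommGroup V] [Module ℚ V] [FiniteDimensional ℚ V]
    (B : V →ₗ[ℚ] V →ₗ[ℚ] ℚ) (hB : ∀ x y : V, B x y = B y x)
    (H f : V) (hHH : B H H = 0) (hff : B f f = 0) (hHf : B H f = 1)
    (χ μ r d k a r₁ d₁ k₁ a₁ : ℚ) (D D₁ : V)
    (hDf : B D f = 0) (hDH : B D H = 0)
    (hD₁f : B D₁ f = 0) (hD₁H : B D₁ H = 0)
    (hμ : 0 < μ) (hr₁pos : 0 < r₁) (hr₁r : r₁ < r)
    (hprop : r * d₁ = r₁ * d)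
    (hD₁neg : B D₁ D₁ ≤ 0)
    (hBog₁ : B (d₁ • H + k₁ • f + D₁) (d₁ • H + k₁ • f + D₁) - 2 * r₁ * a₁ ≥ -(r₁ ^ 2 * χ))
    (hμk : μ * (r₁ * k - r * k₁) ≥ 1)
    (hpos : -(B D D) + (B (d • H + k • f + D) (d • H + k • f + D) - 2 * r * a) + r ^ 2 * χ > 0) :
    d / r - μ * (-(B D D) + (B (d • H + k • f + D) (d • H + k • f + D) - 2 * r * a)
        + r ^ 2 * χ) / 2
      < (r₁ * a - r * a₁) / (r₁ * k - r * k₁) := by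
  have hfH : B f H = 1 := by rw [hB]; exact hHf
  have hfD : B f D = 0 := by rw [hB]; exact hDf
  have hHD : B H D = 0 := by rw [hB]; exact hDH
  have hfD₁ : B f D₁ = 0 := by rw [hB]; exact hD₁f
  have hHD₁ : B H D₁ = 0 := by rw [hB]; exact hD₁H
  have key : B (d • H + k • f + D) (d • H + k • f + D) = 2 * d * k + B D D := by
    simp [map_add, map_smul, smul_eq_mul, hHH, hff, hHf, hfH, hDf, hDH, hfD, hHD]
    ring
  have key₁ : B (d₁ • H + k₁ • f + D₁) (d₁ • H + k₁ • f + D₁)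
      = 2 * d₁ * k₁ + B D₁ D₁ := by
    simp [map_add, map_smul, smul_eq_mul, hHH, hff, hHf, hfH, hD₁f, hD₁H, hfD₁, hHD₁]
    ring
  rw [key] at hpos ⊢
  rw [key₁] at hBog₁
  set Q : ℚ := 2 * d * k - 2 * r * a + r ^ 2 * χ with hQdef
  have hgoalQ : -(B D D) + (2 * d * k + B D D - 2 * r * a) + r ^ 2 * χ = Q := by
    rw [hQdef]; ring
  rw [hgoalQ] at hpos ⊢
  set κ : ℚ := r₁ * k - r * k₁ with hκdef
  have hr : 0 < r := lt_trans hr₁pos hr₁r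
  have hκ : 0 < κ := by nlinarith
  have hB1 : 2 * (d₁ * k₁ - r₁ * a₁) ≥ -(r₁ ^ 2 * χ) := by nlinarith
  have h1 : 0 < μ * r * κ - r₁ := by nlinarith [mul_le_mul_of_nonneg_left hμk (le_of_lt hr)]
  have hsub : r₁ * (2 * r * (r₁ * a - r * a₁) - 2 * d * κ)
      = r₁ ^ 2 * (2 * (r * a - d * k)) + r ^ 2 * (2 * (d₁ * k₁ - r₁ * a₁)) := by
    rw [hκdef]; linear_combination (-2 * r * k₁) * hprop
  have e1 : 2 * (r * a - d * k) = r ^ 2 * χ - Q := by rw [hQdef]; ring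
  have e2 : r ^ 2 * (2 * (d₁ * k₁ - r₁ * a₁)) ≥ r ^ 2 * (-(r₁ ^ 2 * χ)) :=
    mul_le_mul_of_nonneg_left hB1 (sq_nonneg r)
  have e3 : 0 < r₁ * (Q * (μ * r * κ - r₁)) := mul_pos hr₁pos (mul_pos hpos h1)
  have h4 : r₁ * (2 * r * (r₁ * a - r * a₁) - 2 * d * κ + μ * Q * r * κ)
      = r₁ ^ 2 * (r ^ 2 * χ - Q) + r ^ 2 * (2 * (d₁ * k₁ - r₁ * a₁))
        + r₁ * (μ * Q * r * κ) := by
    linear_combination hsub + r₁ ^ 2 * e1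
  have hprod : 0 < r₁ * (2 * r * (r₁ * a - r * a₁) - 2 * d * κ + μ * Q * r * κ) := by
    nlinarith [h4, e2, e3]
  have hF : 0 < 2 * r * (r₁ * a - r * a₁) - 2 * d * κ + μ * Q * r * κ := by
    nlinarith [hprod, hr₁pos]
  have hrew : d / r - μ * Q / 2 = (2 * d - μ * Q * r) / (2 * r) := by
    field_simp
  rw [hrew, div_lt_div_iff₀ (by positivity) hκ]
  nlinarith [hF]
end

section
/- Let χ ∈ ℚ, μ > 0 rational, let v = (r, dH + kf + D, a) with r > 0 and D ∈ N, and let v₁ = (0, k₁f + D₁, a₁) with D₁ ∈ N. Assume μk₁ ≥ 1, (D − D₁, D − D₁) ≤ 0, ⟨v − v₁, v − v₁⟩ ≥ −r²χ, and −(D,D) + ⟨v,v⟩ + r²χ ≥ 0. Then a₁/k₁ ≥ d/r − μ(−(D,D) + ⟨v,v⟩ + r²χ)/(2r). (This is the rank-zero case of the paper's Lemma locating the Gieseker chamber; since r ≥ 1 for Mukai vectors of sheaves, it yields the paper's bound a₁/k₁ ≥ d/r − μ(−(D,D) + ⟨v,v⟩ + r²χ)/2.) -/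
/-- Rank-zero case of the paper's Lemma locating the Gieseker chamber: with
`v = (r, dH + kf + D, a)`, `r > 0`, `D ∈ N`, and `v₁ = (0, k₁f + D₁, a₁)`,
`D₁ ∈ N`, assuming `μk₁ ≥ 1`, `(D − D₁, D − D₁) ≤ 0`,
`⟨v − v₁, v − v₁⟩ ≥ −r²χ` and `−(D,D) + ⟨v,v⟩ + r²χ ≥ 0`, one has
`a₁/k₁ ≥ d/r − μ(−(D,D) + ⟨v,v⟩ + r²χ)/(2r)`. -/
theorem stmt5 {V : Type*} [AddCommGroup V] [Module ℚ V] [FiniteDimensional ℚ V]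
    (B : V →ₗ[ℚ] V →ₗ[ℚ] ℚ) (hB : ∀ x y : V, B x y = B y x)
    (H f : V) (hHH : B H H = 0) (hff : B f f = 0) (hHf : B H f = 1)
    (χ μ r d k a k₁ a₁ : ℚ) (D D₁ : V)
    (hDf : B D f = 0) (hDH : B D H = 0)
    (hD₁f : B D₁ f = 0) (hD₁H : B D₁ H = 0)
    (hμ : 0 < μ) (hr : 0 < r)
    (hμk₁ : μ * k₁ ≥ 1)
    (hDD₁ : B (D - D₁) (D - D₁) ≤ 0)
    (hBog : B (d • H + (k - k₁) • f + (D - D₁)) (d • H + (k - k₁) • f + (D - D₁))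
        - 2 * r * (a - a₁) ≥ -(r ^ 2 * χ))
    (hpos : -(B D D) + (B (d • H + k • f + D) (d • H + k • f + D) - 2 * r * a)
        + r ^ 2 * χ ≥ 0) :
    a₁ / k₁ ≥ d / r - μ * (-(B D D)
        + (B (d • H + k • f + D) (d • H + k • f + D) - 2 * r * a) + r ^ 2 * χ) / (2 * r) := by
  have hfH : B f H = 1 := by rw [hB]; exact hHf
  have hfD : B f D = 0 := by rw [hB]; exact hDf
  have hHD : B H D = 0 := by rw [hB]; exact hDH
  have hfD₁ : B f D₁ = 0 := by rw [hB]; exact hD₁f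
  have hHD₁ : B H D₁ = 0 := by rw [hB]; exact hD₁H
  have e1 : B (d • H + k • f + D) (d • H + k • f + D) = 2*d*k + B D D := by
    simp [map_add, map_smul, hHH, hff, hHf, hfH, hDf, hDH, hfD, hHD]
    ring
  have e2 : B (d • H + (k - k₁) • f + (D - D₁)) (d • H + (k - k₁) • f + (D - D₁))
      = 2*d*(k - k₁) + B (D - D₁) (D - D₁) := by
    simp [map_add, map_sub, map_smul, hHH, hff, hHf, hfH, hDf, hDH, hfD, hHD,
      hD₁f, hD₁H, hfD₁, hHD₁]
    ring
  rw [e1] at hpos ⊢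
  rw [e2] at hBog
  have hk₁ : 0 < k₁ := by nlinarith
  rw [ge_iff_le, div_sub_div _ _ (ne_of_gt hr) (by positivity : (2:ℚ)*r ≠ 0),
    div_le_div_iff₀ (by positivity) hk₁]
  have hA := mul_nonneg hr.le (by linarith :
    0 ≤ 2*d*(k-k₁) + B (D-D₁) (D-D₁) - 2*r*(a-a₁) + r^2*χ)
  have hC := mul_nonneg (mul_nonneg hr.le (by linarith : 0 ≤ μ*k₁ - 1)) hpos
  have hE := mul_nonneg hr.le (neg_nonneg.mpr hDD₁)
  nlinarith [hA, hC, hE]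
end

section
/- Fix a positive integer r, ξ ∈ Λ, a ∈ ℚ with m·a ∈ ℤ, and χ ∈ ℚ, and set v := (r, ξ, a). For a Mukai vector v₁ = (r₁, ξ₁, a₁) let D(v₁) := ξ₁ − (ξ₁·f)·H − (ξ₁·H)·f denote its component orthogonal to H and f. Then the set of triples (r₁, ⟨v₁,v₁⟩, D(v₁)), where v₁ = (r₁, ξ₁, a₁) ranges over Mukai vectors with 0 < r₁ < r, r·(ξ₁·f) = r₁·(ξ·f), ⟨v₁,v₁⟩ ≥ −r₁²χ and ⟨v − v₁, v − v₁⟩ ≥ −(r − r₁)²χ, is finite. (This is the lattice-theoretic form of the paper's Lemma that only finitely many pairs (⟨v₁²⟩, D(v₁)) occur for subsheaves E₁ of sheaves E with v(E) = v satisfying the Bogomolov inequalities; the Bogomolov bounds ⟨v_i²⟩ ≥ −r_i²χ(O_X) are taken as hypotheses.) -/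
theorem key_real (R t q₁ q₂ y₁ y₂ χ w : ℝ)
    (h1 : 1 ≤ t) (h2 : t ≤ R - 1)
    (hy₁ : y₁ ≤ 0) (hy₂ : y₂ ≤ 0)
    (hid : (R - t) * q₁ + t * q₂ = (R - t) * y₁ + t * y₂ + 2 * t * (R - t) * w)
    (hq₁ : -(t ^ 2 * χ) ≤ q₁) (hq₂ : -((R - t) ^ 2 * χ) ≤ q₂) :
    q₁ ≤ R ^ 2 * |χ| + 2 * R * |w| ∧ -(2 * R ^ 2 * |χ| + 2 * R * |w|) ≤ y₁ := by
  have hRt : 1 ≤ R - t := by linarith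
  have ht0 : (0:ℝ) ≤ t := by linarith
  have hRt0 : (0:ℝ) ≤ R - t := by linarith
  have hRtpos : (0:ℝ) < R - t := by linarith
  have hw1 : w ≤ |w| := le_abs_self w
  have hw2 : -|w| ≤ w := neg_abs_le w
  have hc1 : χ ≤ |χ| := le_abs_self χ
  have hc2 : -|χ| ≤ χ := neg_abs_le χ
  have hwn : 0 ≤ |w| := abs_nonneg w
  have hcn : 0 ≤ |χ| := abs_nonneg χ
  have key1 : (R - t) * (-(t ^ 2 * χ)) ≤ (R - t) * q₁ :=
    mul_le_mul_of_nonneg_left hq₁ hRt0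
  have key2 : t * (-((R - t) ^ 2 * χ)) ≤ t * q₂ :=
    mul_le_mul_of_nonneg_left hq₂ ht0
  constructor
  · -- q₁ ≤ bound
    have hstep : (R - t) * q₁ ≤ (R - t) * (t * (R - t) * χ + 2 * t * w) := by
      nlinarith [mul_nonneg (mul_nonneg ht0 hRt0) (sub_nonneg.2 hw2)]
    have hq1b : q₁ ≤ t * (R - t) * χ + 2 * t * w := le_of_mul_le_mul_left hstep hRtpos
    nlinarith [mul_nonneg (mul_nonneg ht0 hRt0) (sub_nonneg.2 hc1),
      mul_nonneg ht0 (sub_nonneg.2 hw1), sq_nonneg (2 * R - t), sq_nonneg t,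
      mul_nonneg (sub_nonneg.2 h2) hwn, mul_nonneg (mul_nonneg hRt0 (by linarith : (0:ℝ) ≤ R + t)) hcn,
      sq_nonneg (R - 2 * t), mul_nonneg hcn (sq_nonneg (2 * R - t)) ]
  · -- y₁ ≥ -bound
    have hstep : (R - t) * (-(t ^ 2 * χ) - t * (R - t) * χ - 2 * t * |w|) ≤ (R - t) * y₁ := by
      nlinarith [mul_nonneg (mul_nonneg ht0 hRt0) (sub_nonneg.2 hw1),
        mul_nonpos_of_nonneg_of_nonpos ht0 hy₂]
    have hy1b : -(t ^ 2 * χ) - t * (R - t) * χ - 2 * t * |w| ≤ y₁ :=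
      le_of_mul_le_mul_left hstep hRtpos
    nlinarith [mul_nonneg (mul_nonneg ht0 hRt0) (sub_nonneg.2 hc1),
      mul_nonneg ht0 (sub_nonneg.2 hw1), mul_nonneg (sub_nonneg.2 h2) hwn,
      mul_nonneg (mul_nonneg hRt0 (by linarith : (0:ℝ) ≤ R + t)) hcn,
      mul_nonneg hcn (sq_nonneg (2 * R - t)), mul_nonneg (mul_nonneg ht0 ht0) (sub_nonneg.2 hc2),
      mul_nonneg (mul_nonneg ht0 hRt0) (sub_nonneg.2 hc2)]


lemma stmt8_sq_bound (R t x : ℝ) (h1 : 1 ≤ t) (h2 : t ≤ R - 1) : t ^ 2 * x ≤ R ^ 2 * |x| := by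
  have hx1 : x ≤ |x| := le_abs_self x
  have hx0 : 0 ≤ |x| := abs_nonneg x
  nlinarith [mul_nonneg (mul_nonneg (by linarith : (0:ℝ) ≤ R - t) (by linarith : (0:ℝ) ≤ R + t)) hx0,
    mul_nonneg (mul_nonneg (by linarith : (0:ℝ) ≤ t) (by linarith : (0:ℝ) ≤ t)) (sub_nonneg.2 hx1)]

lemma stmt8_negdef {V : Type*} [NormedAddCommGroup V] [NormedSpace ℝ V] [FiniteDimensional ℝ V]
    (B : V →ₗ[ℝ] V →ₗ[ℝ] ℝ) (H f : V)
    (hneg : ∀ x : V, B x f = 0 → B x H = 0 → x ≠ 0 → B x x < 0) :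
    ∃ c : ℝ, 0 < c ∧ ∀ x : V, B x f = 0 → B x H = 0 → B x x ≤ -(c * ‖x‖ ^ 2) := by
  have hcB : Continuous fun x : V => B x x := by
    have h1 : Continuous fun x : V =>
        (LinearMap.toContinuousLinearMap (B x) : V →L[ℝ] ℝ) :=
      ((LinearMap.toContinuousLinearMap.toLinearMap.comp B)).continuous_of_finiteDimensional
    have h2 : Continuous fun x : V => (LinearMap.toContinuousLinearMap (B x) : V →L[ℝ] ℝ) x :=
      isBoundedBilinearMap_apply.continuous.comp (h1.prodMk continuous_id)
    simpa using h2
  set S : Set V := {x | (B x f = 0 ∧ B x H = 0) ∧ ‖x‖ = 1} with hSdef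
  have hmem : ∀ x : V, B x f = 0 → B x H = 0 → x ≠ 0 → ‖x‖⁻¹ • x ∈ S := by
    intro x hxf hxH hx0
    have hnx : ‖x‖ ≠ 0 := norm_ne_zero_iff.2 hx0
    refine ⟨⟨?_, ?_⟩, ?_⟩
    · simp [map_smul, smul_eq_mul, hxf]
    · simp [map_smul, smul_eq_mul, hxH]
    · rw [norm_smul]; simp [abs_of_nonneg (inv_nonneg.2 (norm_nonneg x)), inv_mul_cancel₀ hnx]
  have hclosed : IsClosed S := by
    have c1 : Continuous fun x : V => B x f := (B.flip f).continuous_of_finiteDimensional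
    have c2 : Continuous fun x : V => B x H := (B.flip H).continuous_of_finiteDimensional
    have : S = ({x : V | B x f = 0} ∩ {x : V | B x H = 0}) ∩ {x : V | ‖x‖ = 1} := by
      ext x; simp [hSdef, and_assoc]
    rw [this]
    exact ((isClosed_eq c1 continuous_const).inter (isClosed_eq c2 continuous_const)).inter
      (isClosed_eq continuous_norm continuous_const)
  have hbdd : Bornology.IsBounded S := by
    refine (Metric.isBounded_closedBall (x := (0:V)) (r := 1)).subset ?_
    intro x hx
    simp only [Metric.mem_closedBall, dist_zero_right]
    exact le_of_eq hx.2
  have hcpt : IsCompact S := Metric.isCompact_of_isClosed_isBounded hclosed hbdd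
  by_cases hne : S.Nonempty
  · obtain ⟨x₀, hx₀, hmax⟩ := hcpt.exists_isMaxOn hne hcB.continuousOn
    have hx₀ne : x₀ ≠ 0 := by
      intro h
      have := hx₀.2
      rw [h] at this; simp at this
    have hlt : B x₀ x₀ < 0 := hneg x₀ hx₀.1.1 hx₀.1.2 hx₀ne
    refine ⟨-(B x₀ x₀), by linarith, ?_⟩
    intro x hxf hxH
    rcases eq_or_ne x 0 with rfl | hx0
    · simp
    · have hnx : ‖x‖ ≠ 0 := norm_ne_zero_iff.2 hx0
      have hpos : 0 < ‖x‖ := norm_pos_iff.2 hx0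
      have hu := hmem x hxf hxH hx0
      have h : B (‖x‖⁻¹ • x) (‖x‖⁻¹ • x) ≤ B x₀ x₀ := hmax hu
      have huu : B (‖x‖⁻¹ • x) (‖x‖⁻¹ • x) = ‖x‖⁻¹ * (‖x‖⁻¹ * B x x) := by
        simp [map_smul, smul_eq_mul]
      rw [huu] at h
      calc B x x = (‖x‖ * ‖x‖) * (‖x‖⁻¹ * (‖x‖⁻¹ * B x x)) := by field_simp
        _ ≤ (‖x‖ * ‖x‖) * (B x₀ x₀) := mul_le_mul_of_nonneg_left h (by positivity)
        _ = -(-(B x₀ x₀) * ‖x‖ ^ 2) := by ring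
  · refine ⟨1, one_pos, ?_⟩
    intro x hxf hxH
    rcases eq_or_ne x 0 with rfl | hx0
    · simp
    · exact absurd ⟨_, hmem x hxf hxH hx0⟩ hne

lemma stmt8_latt_fin {V : Type*} [NormedAddCommGroup V] [NormedSpace ℝ V]
    [FiniteDimensional ℝ V] {n : ℕ} (b : Module.Basis (Fin n) ℝ V) (R : ℝ) :
    {y : V | y ∈ Submodule.span ℤ (Set.range ⇑b) ∧ ‖y‖ ≤ R}.Finite := by
  have hdisc : DiscreteTopology ((Submodule.span ℤ (Set.range ⇑b) : Submodule ℤ V) : Set V) :=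
    inferInstanceAs (DiscreteTopology (Submodule.span ℤ (Set.range ⇑b)))
  have hclosed : IsClosed ((Submodule.span ℤ (Set.range ⇑b) : Submodule ℤ V) : Set V) := by
    have : IsClosed ((Submodule.span ℤ (Set.range ⇑b)).toAddSubgroup : Set V) :=
      AddSubgroup.isClosed_of_discrete
    exact this
  have hfin := Metric.finite_isBounded_inter_isClosed
    (K := Metric.closedBall (0:V) R) (s := ((Submodule.span ℤ (Set.range ⇑b) : Submodule ℤ V) : Set V))
    (isDiscrete_iff_discreteTopology.mpr hdisc) Metric.isBounded_closedBall hclosed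
  refine hfin.subset ?_
  intro y hy
  exact ⟨by simpa [Metric.mem_closedBall, dist_zero_right] using hy.2, hy.1⟩
set_option maxHeartbeats 1600000 in
/-- Lattice-theoretic form of the paper's Lemma: only finitely many triples
`(r₁, ⟨v₁,v₁⟩, D(v₁))` occur among Mukai vectors `v₁ = (r₁, ξ₁, a₁)` with
`0 < r₁ < r`, `r(ξ₁·f) = r₁(ξ·f)`, `⟨v₁,v₁⟩ ≥ −r₁²χ` and
`⟨v − v₁, v − v₁⟩ ≥ −(r − r₁)²χ`, where
`D(v₁) = ξ₁ − (ξ₁·f)H − (ξ₁·H)f` is the component orthogonal to `H` and `f`. -/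
theorem stmt8 {V : Type*} [NormedAddCommGroup V] [NormedSpace ℝ V] [FiniteDimensional ℝ V]
    (B : V →ₗ[ℝ] V →ₗ[ℝ] ℝ) (hBsymm : ∀ x y : V, B x y = B y x)
    (n : ℕ) (b : Module.Basis (Fin n) ℝ V) (Λ : Submodule ℤ V)
    (hΛ : Λ = Submodule.span ℤ (Set.range ⇑b))
    (hBint : ∀ x ∈ Λ, ∀ y ∈ Λ, ∃ z : ℤ, B x y = (z : ℝ))
    (H f : V)
    (hHH : B H H = 0) (hff : B f f = 0) (hHf : B H f = 1)
    (hHrat : ∃ q : ℤ, q ≠ 0 ∧ q • H ∈ Λ) (hfrat : ∃ q : ℤ, q ≠ 0 ∧ q • f ∈ Λ)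
    (hneg : ∀ x : V, B x f = 0 → B x H = 0 → x ≠ 0 → B x x < 0)
    (m : ℕ) (hm : 0 < m)
    (r : ℤ) (hr : 0 < r) (ξ : V) (hξ : ξ ∈ Λ) (a χ : ℚ)
    (ha : ∃ z : ℤ, (m : ℚ) * a = (z : ℚ)) :
    {t : ℤ × ℝ × V | ∃ ξ₁ ∈ Λ, ∃ a₁ : ℚ, (∃ z : ℤ, (m : ℚ) * a₁ = (z : ℚ)) ∧
      0 < t.1 ∧ t.1 < r ∧
      (r : ℝ) * B ξ₁ f = (t.1 : ℝ) * B ξ f ∧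
      t.2.1 = B ξ₁ ξ₁ - 2 * (t.1 : ℝ) * (a₁ : ℝ) ∧
      -((t.1 : ℝ) ^ 2 * (χ : ℝ)) ≤ t.2.1 ∧
      -(((r - t.1 : ℤ) : ℝ) ^ 2 * (χ : ℝ))
        ≤ B (ξ - ξ₁) (ξ - ξ₁) - 2 * ((r - t.1 : ℤ) : ℝ) * ((a : ℝ) - (a₁ : ℝ)) ∧
      t.2.2 = ξ₁ - B ξ₁ f • H - B ξ₁ H • f}.Finite := by
  obtain ⟨c, hc, hbound⟩ := stmt8_negdef B H f hneg
  obtain ⟨p, hp0, hpH⟩ := hHrat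
  obtain ⟨q, hq0, hqf⟩ := hfrat
  have hfH : B f H = 1 := by rw [hBsymm]; exact hHf
  have hRpos : (0:ℝ) < (r:ℝ) := by exact_mod_cast hr
  have hR0 : (r:ℝ) ≠ 0 := ne_of_gt hRpos
  have hm0 : ((m:ℝ)) ≠ 0 := by positivity
  have hp0' : ((p:ℝ)) ≠ 0 := Int.cast_ne_zero.2 hp0
  have hq0' : ((q:ℝ)) ≠ 0 := Int.cast_ne_zero.2 hq0
  have hn₀0 : p * q ≠ 0 := mul_ne_zero hp0 hq0
  -- abbreviations (plain reals, no folding)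
  set wv : ℝ := B ξ f * B ξ H / (r:ℝ) - (a:ℝ) with hwv
  set hiv : ℝ := (r:ℝ) ^ 2 * |(χ:ℝ)| + 2 * (r:ℝ) * |wv| with hhiv
  set lov : ℝ := -((r:ℝ) ^ 2 * |(χ:ℝ)|) with hlov
  set Cyv : ℝ := 2 * (r:ℝ) ^ 2 * |(χ:ℝ)| + 2 * (r:ℝ) * |wv| with hCyv
  set R₀ : ℝ := Real.sqrt (Cyv / c) with hR₀
  -- finite candidate sets
  have hS1 : (Set.Icc (1:ℤ) (r-1)).Finite := Set.finite_Icc _ _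
  have hS2 : ((fun z : ℤ => (z:ℝ)/(m:ℝ)) '' (Set.Icc ⌈lov * m⌉ ⌊hiv * m⌋)).Finite :=
    (Set.finite_Icc _ _).image _
  have hS3 : {x : V | (p * q) • x ∈ Λ ∧ ‖x‖ ≤ R₀}.Finite := by
    have hinj : Function.Injective (fun x : V => (p * q) • x) := by
      intro x y hxy
      have h2 : (((p*q : ℤ)):ℝ) • x = (((p*q : ℤ)):ℝ) • y := by
        rw [Int.cast_smul_eq_zsmul, Int.cast_smul_eq_zsmul]; exact hxy
      exact smul_right_injective V (Int.cast_ne_zero.2 hn₀0) h2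
    have himg : (fun x : V => (p * q) • x) '' {x : V | (p * q) • x ∈ Λ ∧ ‖x‖ ≤ R₀}
        ⊆ {y : V | y ∈ Submodule.span ℤ (Set.range ⇑b) ∧ ‖y‖ ≤ |((p*q : ℤ):ℝ)| * R₀} := by
      rintro y ⟨x, hx, rfl⟩
      refine ⟨by rw [← hΛ]; exact hx.1, ?_⟩
      show ‖(p * q) • x‖ ≤ _
      rw [← Int.cast_smul_eq_zsmul ℝ (p*q) x, norm_smul]
      simp only [Real.norm_eq_abs]
      exact mul_le_mul_of_nonneg_left hx.2 (abs_nonneg _)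
    exact Set.Finite.of_finite_image ((stmt8_latt_fin b _).subset himg) hinj.injOn
  refine ((hS1.prod (hS2.prod hS3)).subset ?_)
  rintro t ⟨ξ₁, hξ₁, a₁, ⟨z', hz'⟩, ht1, ht2, hdf, hval, hq1, hq2, hD⟩
  have hτ1 : (1:ℝ) ≤ (t.1:ℝ) := by exact_mod_cast ht1
  have hτ2 : (t.1:ℝ) ≤ (r:ℝ) - 1 := by
    have h : t.1 ≤ r - 1 := by omega
    have h2 : (t.1:ℝ) ≤ ((r - 1 : ℤ):ℝ) := by exact_mod_cast h
    push_cast at h2; linarith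
  -- orthogonality facts
  have horth : ∀ x : V, B (x - B x f • H - B x H • f) f = 0 ∧
      B (x - B x f • H - B x H • f) H = 0 := by
    intro x
    constructor <;>
      simp [map_sub, map_smul, LinearMap.sub_apply, LinearMap.smul_apply, smul_eq_mul, hHH, hff,
        hHf, hfH]
  have hexp : ∀ x : V, B (x - B x f • H - B x H • f) (x - B x f • H - B x H • f)
      = B x x - 2 * (B x f) * (B x H) := by
    intro x
    have hHx : B H x = B x H := hBsymm H x
    have hfx : B f x = B x f := hBsymm f x
    simp only [map_sub, map_smul, LinearMap.sub_apply, LinearMap.smul_apply, smul_eq_mul, hHH,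
      hff, hHf, hfH, hHx, hfx]
    ring
  have hDsub : (ξ - ξ₁) - B (ξ - ξ₁) f • H - B (ξ - ξ₁) H • f
      = (ξ - B ξ f • H - B ξ H • f) - (ξ₁ - B ξ₁ f • H - B ξ₁ H • f) := by
    simp only [map_sub, LinearMap.sub_apply, sub_smul]
    abel
  have hy₁f : B (ξ₁ - B ξ₁ f • H - B ξ₁ H • f) f = 0 := (horth ξ₁).1
  have hy₁H : B (ξ₁ - B ξ₁ f • H - B ξ₁ H • f) H = 0 := (horth ξ₁).2
  have hy₂f : B ((ξ - B ξ f • H - B ξ H • f) - (ξ₁ - B ξ₁ f • H - B ξ₁ H • f)) f = 0 := by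
    rw [← hDsub]; exact (horth (ξ - ξ₁)).1
  have hy₂H : B ((ξ - B ξ f • H - B ξ H • f) - (ξ₁ - B ξ₁ f • H - B ξ₁ H • f)) H = 0 := by
    rw [← hDsub]; exact (horth (ξ - ξ₁)).2
  have hy₁b := hbound _ hy₁f hy₁H
  have hy₂b := hbound _ hy₂f hy₂H
  have hy₁0 : B (ξ₁ - B ξ₁ f • H - B ξ₁ H • f) (ξ₁ - B ξ₁ f • H - B ξ₁ H • f) ≤ 0 :=
    le_trans hy₁b (neg_nonpos.mpr (by positivity))
  have hy₂0 : B ((ξ - B ξ f • H - B ξ H • f) - (ξ₁ - B ξ₁ f • H - B ξ₁ H • f))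
      ((ξ - B ξ f • H - B ξ H • f) - (ξ₁ - B ξ₁ f • H - B ξ₁ H • f)) ≤ 0 :=
    le_trans hy₂b (neg_nonpos.mpr (by positivity))
  -- scalar expansions
  have hc₁ : B ξ₁ f = (t.1:ℝ) * B ξ f / (r:ℝ) := by rw [eq_div_iff hR0]; linarith [hdf]
  have hsubf : B (ξ - ξ₁) f = B ξ f - (t.1:ℝ) * B ξ f / (r:ℝ) := by
    rw [map_sub, LinearMap.sub_apply, hc₁]
  have hsubH : B (ξ - ξ₁) H = B ξ H - B ξ₁ H := by rw [map_sub, LinearMap.sub_apply]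
  have ey₁ : B (ξ₁ - B ξ₁ f • H - B ξ₁ H • f) (ξ₁ - B ξ₁ f • H - B ξ₁ H • f)
      = B ξ₁ ξ₁ - 2 * ((t.1:ℝ) * B ξ f / (r:ℝ)) * (B ξ₁ H) := by
    rw [hexp ξ₁, hc₁]
  have ey₂ : B ((ξ - B ξ f • H - B ξ H • f) - (ξ₁ - B ξ₁ f • H - B ξ₁ H • f))
        ((ξ - B ξ f • H - B ξ H • f) - (ξ₁ - B ξ₁ f • H - B ξ₁ H • f))
      = B (ξ - ξ₁) (ξ - ξ₁)
        - 2 * (B ξ f - (t.1:ℝ) * B ξ f / (r:ℝ)) * (B ξ H - B ξ₁ H) := by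
    rw [← hDsub, hexp (ξ - ξ₁), hsubf, hsubH]
  -- the key identity and bounds
  have hcast : ((r - t.1 : ℤ) : ℝ) = (r:ℝ) - (t.1:ℝ) := by push_cast; ring
  rw [hcast] at hq2
  have hid : ((r:ℝ) - (t.1:ℝ)) * t.2.1
        + (t.1:ℝ) * (B (ξ - ξ₁) (ξ - ξ₁) - 2 * ((r:ℝ) - (t.1:ℝ)) * ((a : ℝ) - (a₁ : ℝ)))
      = ((r:ℝ) - (t.1:ℝ)) * (B (ξ₁ - B ξ₁ f • H - B ξ₁ H • f) (ξ₁ - B ξ₁ f • H - B ξ₁ H • f))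
        + (t.1:ℝ) * (B ((ξ - B ξ f • H - B ξ H • f) - (ξ₁ - B ξ₁ f • H - B ξ₁ H • f))
            ((ξ - B ξ f • H - B ξ H • f) - (ξ₁ - B ξ₁ f • H - B ξ₁ H • f)))
        + 2 * (t.1:ℝ) * ((r:ℝ) - (t.1:ℝ)) * wv := by
    rw [hval, ey₁, ey₂, hwv]
    field_simp
    ring
  obtain ⟨hup, hylow⟩ := key_real (r:ℝ) (t.1:ℝ) t.2.1
    (B (ξ - ξ₁) (ξ - ξ₁) - 2 * ((r:ℝ) - (t.1:ℝ)) * ((a : ℝ) - (a₁ : ℝ)))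
    (B (ξ₁ - B ξ₁ f • H - B ξ₁ H • f) (ξ₁ - B ξ₁ f • H - B ξ₁ H • f))
    (B ((ξ - B ξ f • H - B ξ H • f) - (ξ₁ - B ξ₁ f • H - B ξ₁ H • f))
      ((ξ - B ξ f • H - B ξ H • f) - (ξ₁ - B ξ₁ f • H - B ξ₁ H • f)))
    (χ:ℝ) wv hτ1 hτ2 hy₁0 hy₂0 hid hq1 hq2
  -- assemble membership
  refine Set.mem_prod.mpr ⟨?_, Set.mem_prod.mpr ⟨?_, ?_⟩⟩
  · exact Set.mem_Icc.mpr ⟨ht1, by omega⟩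
  · -- middle component
    obtain ⟨zB, hzB⟩ := hBint ξ₁ hξ₁ ξ₁ hξ₁
    have ha₁ : (a₁ : ℝ) = (z' : ℝ) / (m : ℝ) := by
      have h2 : (m:ℝ) * (a₁:ℝ) = (z':ℝ) := by exact_mod_cast congrArg (fun x : ℚ => (x:ℝ)) hz'
      field_simp
      linarith
    have hteq : t.2.1 = ((m * zB - 2 * t.1 * z' : ℤ):ℝ) / (m:ℝ) := by
      rw [hval, hzB, ha₁]
      push_cast
      field_simp
    have hτR : (t.1:ℝ) ≤ (r:ℝ) := by linarith
    have hlo' : lov ≤ t.2.1 := by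
      have h1 : (t.1:ℝ) ^ 2 * (χ:ℝ) ≤ (r:ℝ) ^ 2 * |(χ:ℝ)| := stmt8_sq_bound _ _ _ hτ1 hτ2
      rw [hlov]; linarith
    have hzval : ((m * zB - 2 * t.1 * z' : ℤ):ℝ) = t.2.1 * m := by
      rw [hteq]; field_simp
    have hmpos : (0:ℝ) ≤ (m:ℝ) := by positivity
    refine ⟨m * zB - 2 * t.1 * z',
      Set.mem_Icc.mpr ⟨Int.ceil_le.mpr ?_, Int.le_floor.mpr ?_⟩, hteq.symm⟩
    · rw [hzval]
      exact mul_le_mul_of_nonneg_right hlo' hmpos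
    · rw [hzval]
      exact mul_le_mul_of_nonneg_right hup hmpos
  · -- third component
    rw [hD]
    constructor
    · -- integrality
      obtain ⟨z₁, hz₁⟩ := hBint ξ₁ hξ₁ (q • f) hqf
      obtain ⟨z₂, hz₂⟩ := hBint ξ₁ hξ₁ (p • H) hpH
      have hc₁q : B ξ₁ f = (z₁:ℝ) / (q:ℝ) := by
        rw [eq_div_iff hq0', ← hz₁, map_zsmul, zsmul_eq_mul]; ring
      have hc₂p : B ξ₁ H = (z₂:ℝ) / (p:ℝ) := by
        rw [eq_div_iff hp0', ← hz₂, map_zsmul, zsmul_eq_mul]; ring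
      have key : (p * q) • (ξ₁ - B ξ₁ f • H - B ξ₁ H • f)
          = (p * q) • ξ₁ - z₁ • (p • H) - z₂ • (q • f) := by
        rw [← Int.cast_smul_eq_zsmul ℝ (p*q) (ξ₁ - B ξ₁ f • H - B ξ₁ H • f),
          ← Int.cast_smul_eq_zsmul ℝ (p*q) ξ₁, ← Int.cast_smul_eq_zsmul ℝ p H,
          ← Int.cast_smul_eq_zsmul ℝ q f, ← Int.cast_smul_eq_zsmul ℝ z₁,
          ← Int.cast_smul_eq_zsmul ℝ z₂, hc₁q, hc₂p]
        push_cast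
        match_scalars <;> field_simp <;> ring
      rw [key]
      exact sub_mem (sub_mem (Λ.smul_mem (p*q) hξ₁) (Λ.smul_mem z₁ hpH)) (Λ.smul_mem z₂ hqf)
    · -- norm bound
      have h1 : c * ‖ξ₁ - B ξ₁ f • H - B ξ₁ H • f‖ ^ 2 ≤ Cyv := by
        rw [hCyv]; linarith [hy₁b, hylow]
      have h2 : ‖ξ₁ - B ξ₁ f • H - B ξ₁ H • f‖ ^ 2 ≤ Cyv / c :=
        (le_div_iff₀ hc).mpr (by linarith)
      have hCy0 : (0:ℝ) ≤ Cyv := by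
        rw [hCyv]; positivity
      rw [hR₀]
      exact (Real.le_sqrt (norm_nonneg _) (div_nonneg hCy0 (le_of_lt hc))).mpr h2
end

section
/- Fix a positive integer r, ξ ∈ Λ, a ∈ ℚ with m·a ∈ ℤ, and χ ∈ ℚ; set v := (r, ξ, a) and d := (ξ·f). Let B be a compact subset of {(s, α) ∈ ℝ × N_ℝ : rs ≠ d}. Then there are only finitely many Mukai vectors v₁ = (r₁, ξ₁, a₁) such that: 0 < r₁ < r; r·(ξ₁·f) = r₁·(ξ·f); ⟨v₁,v₁⟩ ≥ −r₁²χ; ⟨v − v₁, v − v₁⟩ ≥ −(r − r₁)²χ; and the wall W_{v₁} of v₁ meets B, i.e. (sH + α, r·ξ₁ − r₁·ξ) = r·a₁ − r₁·a for some (s, α) ∈ B. (This is the positive-rank part of the paper's Lemma that only finitely many walls, defined by ⟨e^{sH+α}, r·v₁ − r₁·v⟩ = 0, meet a compact subset of the parameter space 𝒢(v).) -/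
section Aux

lemma latFinA {V : Type*} [NormedAddCommGroup V] [NormedSpace ℝ V] [FiniteDimensional ℝ V]
    {n : ℕ} (b : Module.Basis (Fin n) ℝ V) (R : ℝ) :
    (Metric.closedBall (0:V) R ∩ (Submodule.span ℤ (Set.range ⇑b) : Set V)).Finite := by
  change ((_ : Set V) ∩ (Submodule.span ℤ (Set.range ⇑b)).toAddSubgroup).Finite
  have : DiscreteTopology (Submodule.span ℤ (Set.range ⇑b)).toAddSubgroup :=
    (inferInstance : DiscreteTopology (Submodule.span ℤ (Set.range ⇑b)))
  exact Metric.finite_isBounded_inter_isClosed DiscreteTopology.isDiscrete Metric.isBounded_closedBall inferInstance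

lemma ratFinA (m : ℕ) (hm : 0 < m) (Ka : ℝ) :
    {q : ℚ | |((q:ℚ):ℝ)| ≤ Ka ∧ ∃ z : ℤ, (m:ℚ) * q = z}.Finite := by
  have h : {q : ℚ | |((q:ℚ):ℝ)| ≤ Ka ∧ ∃ z : ℤ, (m:ℚ) * q = z} ⊆
      (fun z : ℤ => (z : ℚ)/m) '' (Set.Icc (-(⌊(m:ℝ)*Ka⌋)) ⌊(m:ℝ)*Ka⌋) := by
    rintro q ⟨hq, z, hz⟩
    have hm' : (0:ℝ) < m := by exact_mod_cast hm
    have hzq : ((z:ℝ)) = (m:ℝ) * (q:ℝ) := by exact_mod_cast hz.symm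
    have h1 : |(z:ℝ)| ≤ (m:ℝ)*Ka := by
      rw [hzq, abs_mul, abs_of_pos hm']
      exact mul_le_mul_of_nonneg_left hq hm'.le
    rw [abs_le] at h1
    refine ⟨z, ⟨?_, Int.le_floor.mpr h1.2⟩, ?_⟩
    · rw [neg_le]
      exact Int.le_floor.mpr (by push_cast; linarith [h1.1])
    · field_simp at hz ⊢
      linarith [hz]
  exact Set.Finite.subset ((Set.finite_Icc _ _).image _) h

lemma bilinBound {V : Type*} [NormedAddCommGroup V] [NormedSpace ℝ V] [FiniteDimensional ℝ V]
    (B : V →ₗ[ℝ] V →ₗ[ℝ] ℝ) :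
    ∃ C : ℝ, 0 ≤ C ∧ (∀ x y : V, |B x y| ≤ C * ‖x‖ * ‖y‖) ∧
      Continuous fun p : V × V => B p.1 p.2 := by
  let B' : V →L[ℝ] V →L[ℝ] ℝ :=
    LinearMap.toContinuousLinearMap
      (((LinearMap.toContinuousLinearMap :
          (V →ₗ[ℝ] ℝ) ≃ₗ[ℝ] (V →L[ℝ] ℝ)) : (V →ₗ[ℝ] ℝ) →ₗ[ℝ] (V →L[ℝ] ℝ)).comp B)
  have hB' : ∀ x y, B' x y = B x y := by
    intro x y
    simp [B', LinearMap.coe_toContinuousLinearMap']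
  refine ⟨‖B'‖, norm_nonneg B', fun x y => ?_, ?_⟩
  · rw [← hB', ← Real.norm_eq_abs]
    calc ‖B' x y‖ ≤ ‖B' x‖ * ‖y‖ := (B' x).le_opNorm y
    _ ≤ ‖B'‖ * ‖x‖ * ‖y‖ := by
        have := B'.le_opNorm x
        exact mul_le_mul_of_nonneg_right this (norm_nonneg _)
  · have : Continuous fun p : V × V => B' p.1 p.2 :=
      (B'.continuous.comp continuous_fst).clm_apply continuous_snd
    simpa [hB'] using this

lemma coercive {V : Type*} [NormedAddCommGroup V] [NormedSpace ℝ V] [FiniteDimensional ℝ V]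
    (B : V →ₗ[ℝ] V →ₗ[ℝ] ℝ) (H f : V)
    (hcont : Continuous fun p : V × V => B p.1 p.2)
    (hneg : ∀ x : V, B x f = 0 → B x H = 0 → x ≠ 0 → B x x < 0) :
    ∃ c : ℝ, 0 < c ∧ ∀ w : V, B w f = 0 → B w H = 0 → B w w ≤ -c * ‖w‖^2 := by
  have hc1 : Continuous fun w : V => B w f := hcont.comp (continuous_id.prodMk continuous_const)
  have hc2 : Continuous fun w : V => B w H := hcont.comp (continuous_id.prodMk continuous_const)
  have hc3 : Continuous fun w : V => B w w := hcont.comp (continuous_id.prodMk continuous_id)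
  set Sph : Set V := {w | B w f = 0 ∧ B w H = 0} ∩ Metric.sphere 0 1 with hSph
  have hclosed : IsClosed {w : V | B w f = 0 ∧ B w H = 0} :=
    ((isClosed_singleton (x := (0:ℝ))).preimage hc1).inter
      ((isClosed_singleton (x := (0:ℝ))).preimage hc2)
  have hScomp : IsCompact Sph := (isCompact_sphere 0 1).inter_left hclosed
  by_cases hSne : Sph.Nonempty
  · obtain ⟨w₀, hw₀S, hmax⟩ := hScomp.exists_isMaxOn hSne hc3.continuousOn
    have hw₀n : ‖w₀‖ = 1 := by simpa using hw₀S.2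
    have hw₀ne : w₀ ≠ 0 := by intro h; rw [h] at hw₀n; simp at hw₀n
    have hcpos : 0 < -(B w₀ w₀) := by
      have := hneg w₀ hw₀S.1.1 hw₀S.1.2 hw₀ne; linarith
    refine ⟨-(B w₀ w₀), hcpos, fun w hwf hwH => ?_⟩
    rcases eq_or_ne w 0 with rfl | hw
    · simp
    · have hn : (0:ℝ) < ‖w‖ := norm_pos_iff.mpr hw
      set u : V := ‖w‖⁻¹ • w with hu
      have huS : u ∈ Sph := by
        refine ⟨⟨?_, ?_⟩, ?_⟩
        · simp [hu, map_smul, hwf]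
        · simp [hu, map_smul, hwH]
        · simp [hu, norm_smul, abs_of_pos (inv_pos.mpr hn), inv_mul_cancel₀ hn.ne']
      have hle : B u u ≤ B w₀ w₀ := hmax huS
      have huu : B u u = ‖w‖⁻¹ * (‖w‖⁻¹ * B w w) := by
        simp only [hu, map_smul, smul_eq_mul, LinearMap.smul_apply]
      rw [huu] at hle
      have h2 : ‖w‖ * ‖w‖ * (‖w‖⁻¹ * (‖w‖⁻¹ * B w w)) ≤ ‖w‖ * ‖w‖ * B w₀ w₀ :=
        mul_le_mul_of_nonneg_left hle (by positivity)
      have h3 : ‖w‖ * ‖w‖ * (‖w‖⁻¹ * (‖w‖⁻¹ * B w w)) = B w w := by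
        field_simp
      rw [h3] at h2
      nlinarith [h2]
  · refine ⟨1, one_pos, fun w hwf hwH => ?_⟩
    rcases eq_or_ne w 0 with rfl | hw
    · simp
    · exfalso
      apply hSne
      have hn : (0:ℝ) < ‖w‖ := norm_pos_iff.mpr hw
      refine ⟨‖w‖⁻¹ • w, ⟨⟨?_, ?_⟩, ?_⟩⟩
      · simp [map_smul, hwf]
      · simp [map_smul, hwH]
      · simp [norm_smul, abs_of_pos (inv_pos.mpr hn), inv_mul_cancel₀ hn.ne']

lemma mulAbsB {u v C D : ℝ} (h1 : |u| ≤ C) (h2 : |v| ≤ D) : |u*v| ≤ C*D := by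
  rw [abs_mul]
  exact mul_le_mul h1 h2 (abs_nonneg _) ((abs_nonneg u).trans h1)

lemma ybnd {A1c A2c y ε K : ℝ} (hε : 0 < ε) (hK : 0 ≤ K)
    (h1 : -K ≤ A1c*y) (h2 : -K ≤ A2c*y)
    (hA1 : 2*ε ≤ A1c) (hA2 : A2c ≤ -(2*ε)) : |y| ≤ K/(2*ε) := by
  have hpos : (0:ℝ) < 2*ε := by linarith
  have hlow : -K ≤ 2*ε*y := by
    rcases le_or_gt 0 y with hy|hy
    · nlinarith
    · have := mul_le_mul_of_nonpos_right hA1 hy.le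
      linarith
  have hup : 2*ε*y ≤ K := by
    rcases le_or_gt y 0 with hy|hy
    · nlinarith
    · have := mul_le_mul_of_nonneg_right hA2 hy.le
      linarith
  rw [abs_le]
  constructor
  · calc -(K/(2*ε)) = (-K)/(2*ε) := by ring
      _ ≤ (2*ε*y)/(2*ε) := by gcongr
      _ = y := by field_simp
  · calc y = (2*ε*y)/(2*ε) := by field_simp
      _ ≤ K/(2*ε) := by gcongr

lemma projLem {V : Type*} [AddCommGroup V] [Module ℝ V]
    (B : V →ₗ[ℝ] V →ₗ[ℝ] ℝ) (H f : V) (hBsymm : ∀ x y : V, B x y = B y x)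
    (hHH : B H H = 0) (hff : B f f = 0) (hHf : B H f = 1) (v : V) :
    B (v - (B v f)•H - (B v H)•f) f = 0 ∧ B (v - (B v f)•H - (B v H)•f) H = 0 ∧
    B v v = 2*(B v f)*(B v H) +
      B (v - (B v f)•H - (B v H)•f) (v - (B v f)•H - (B v H)•f) := by
  have hfH : B f H = 1 := by rw [hBsymm]; exact hHf
  have e1 : B H v = B v H := hBsymm H v
  have e2 : B f v = B v f := hBsymm f v
  refine ⟨?_, ?_, ?_⟩
  · simp only [map_sub, map_smul, LinearMap.sub_apply, LinearMap.smul_apply, smul_eq_mul]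
    rw [hff, hHf]; ring
  · simp only [map_sub, map_smul, LinearMap.sub_apply, LinearMap.smul_apply, smul_eq_mul]
    rw [hHH, hfH]; ring
  · simp only [map_sub, map_smul, LinearMap.sub_apply, LinearMap.smul_apply, smul_eq_mul]
    rw [hHH, hff, hHf, hfH, e1, e2]; ring

end Aux

set_option maxHeartbeats 2000000 in
/-- Positive-rank part of the local finiteness of walls: for a compact subset
`Bset` of `{(s, α) ∈ ℝ × N_ℝ : rs ≠ d}`, only finitely many Mukai vectors
`v₁ = (r₁, ξ₁, a₁)` with `0 < r₁ < r`, `r(ξ₁·f) = r₁(ξ·f)`, the Bogomolov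
bounds `⟨v₁,v₁⟩ ≥ −r₁²χ`, `⟨v − v₁, v − v₁⟩ ≥ −(r − r₁)²χ`, define a wall
`W_{v₁} = {(s, α) : (sH + α, rξ₁ − r₁ξ) = ra₁ − r₁a}` meeting `Bset`. -/
theorem stmt9 {V : Type*} [NormedAddCommGroup V] [NormedSpace ℝ V] [FiniteDimensional ℝ V]
    (B : V →ₗ[ℝ] V →ₗ[ℝ] ℝ) (hBsymm : ∀ x y : V, B x y = B y x)
    (n : ℕ) (b : Module.Basis (Fin n) ℝ V) (Λ : Submodule ℤ V)
    (hΛ : Λ = Submodule.span ℤ (Set.range ⇑b))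
    (hBint : ∀ x ∈ Λ, ∀ y ∈ Λ, ∃ z : ℤ, B x y = (z : ℝ))
    (H f : V)
    (hHH : B H H = 0) (hff : B f f = 0) (hHf : B H f = 1)
    (hHrat : ∃ q : ℤ, q ≠ 0 ∧ q • H ∈ Λ) (hfrat : ∃ q : ℤ, q ≠ 0 ∧ q • f ∈ Λ)
    (hneg : ∀ x : V, B x f = 0 → B x H = 0 → x ≠ 0 → B x x < 0)
    (m : ℕ) (hm : 0 < m)
    (r : ℤ) (hr : 0 < r) (ξ : V) (hξ : ξ ∈ Λ) (a χ : ℚ)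
    (ha : ∃ z : ℤ, (m : ℚ) * a = (z : ℚ))
    (Bset : Set (ℝ × V)) (hBc : IsCompact Bset)
    (hBsub : ∀ p ∈ Bset, B p.2 f = 0 ∧ B p.2 H = 0 ∧ (r : ℝ) * p.1 ≠ B ξ f) :
    {t : ℤ × V × ℚ | t.2.1 ∈ Λ ∧ (∃ z : ℤ, (m : ℚ) * t.2.2 = (z : ℚ)) ∧
      0 < t.1 ∧ t.1 < r ∧
      (r : ℝ) * B t.2.1 f = (t.1 : ℝ) * B ξ f ∧
      -((t.1 : ℝ) ^ 2 * (χ : ℝ)) ≤ B t.2.1 t.2.1 - 2 * (t.1 : ℝ) * ((t.2.2 : ℚ) : ℝ) ∧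
      -(((r - t.1 : ℤ) : ℝ) ^ 2 * (χ : ℝ))
        ≤ B (ξ - t.2.1) (ξ - t.2.1) - 2 * ((r - t.1 : ℤ) : ℝ) * ((a : ℝ) - ((t.2.2 : ℚ) : ℝ)) ∧
      (∃ sα ∈ Bset, B (sα.1 • H + sα.2) (r • t.2.1 - t.1 • ξ)
          = (r : ℝ) * ((t.2.2 : ℚ) : ℝ) - (t.1 : ℝ) * (a : ℝ))}.Finite := by
  classical
  subst hΛ
  by_cases hne : Bset.Nonempty
  case neg =>
    rw [Set.not_nonempty_iff_eq_empty] at hne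
    apply Set.Finite.subset Set.finite_empty
    rintro ⟨r₁, ξ₁, a₁⟩ ⟨-, -, -, -, -, -, -, sα, hsα, -⟩
    rw [hne] at hsα
    exact hsα
  -- basic constants
  obtain ⟨CB, hCB0, hCBle, hcont⟩ := bilinBound B
  obtain ⟨c, hc0, hcoer⟩ := coercive B H f hcont hneg
  obtain ⟨M₀, hM₀⟩ := hBc.isBounded.subset_closedBall 0
  set M : ℝ := max M₀ 0 with hMdef
  have hM0 : (0:ℝ) ≤ M := le_max_right _ _
  have hM : ∀ p ∈ Bset, |p.1| ≤ M ∧ ‖p.2‖ ≤ M := by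
    intro p hp
    have h1 : ‖p‖ ≤ M₀ := by
      have := hM₀ hp
      rwa [Metric.mem_closedBall, dist_zero_right] at this
    constructor
    · calc |p.1| = ‖p.1‖ := (Real.norm_eq_abs _).symm
        _ ≤ ‖p‖ := norm_fst_le p
        _ ≤ M := h1.trans (le_max_left _ _)
    · calc ‖p.2‖ ≤ ‖p‖ := norm_snd_le p
        _ ≤ M := h1.trans (le_max_left _ _)
  have hrR : (0:ℝ) < (r:ℝ) := by exact_mod_cast hr
  have habsr : |(r:ℝ)| ≤ (r:ℝ) := le_of_eq (abs_of_pos hrR)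
  set d : ℝ := B ξ f with hd
  set e' : ℝ := B ξ H with he'
  -- epsilon
  have hgc : Continuous fun p : ℝ × V => |(r:ℝ)*p.1 - d| :=
    ((continuous_const.mul continuous_fst).sub continuous_const).abs
  obtain ⟨p₀, hp₀B, hminp⟩ := hBc.exists_isMinOn hne hgc.continuousOn
  set ε : ℝ := |(r:ℝ)*p₀.1 - d| with hεdef
  have hε0 : 0 < ε := by
    rw [hεdef, abs_pos, sub_ne_zero]
    exact (hBsub p₀ hp₀B).2.2
  have hεle : ∀ p ∈ Bset, ε ≤ |(r:ℝ)*p.1 - d| := fun p hp => hminp hp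
  -- projection of ξ
  set ν : V := ξ - d•H - e'•f with hν
  obtain ⟨hνf, hνH, hdecξ⟩ := projLem B H f hBsymm hHH hff hHf ξ
  -- constants
  set CHI : ℝ := |(χ:ℝ)| with hCHI
  set ABS : ℝ := |(a:ℝ)| with hABS
  set CA : ℝ := (r:ℝ)*((r:ℝ)*((r:ℝ)*CHI)) + 2*((r:ℝ)*((r:ℝ)*ABS)) + 4*((r:ℝ)*(|d| * |e'|))
    with hCAdef
  have hCHI0 : (0:ℝ) ≤ CHI := by rw [hCHI]; exact abs_nonneg _
  have hABS0 : (0:ℝ) ≤ ABS := by rw [hABS]; exact abs_nonneg _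
  have hCA0 : (0:ℝ) ≤ CA := by
    have hr0 : (0:ℝ) ≤ (r:ℝ) := hrR.le
    have t1 : (0:ℝ) ≤ (r:ℝ)*((r:ℝ)*((r:ℝ)*CHI)) :=
      mul_nonneg hr0 (mul_nonneg hr0 (mul_nonneg hr0 hCHI0))
    have t2 : (0:ℝ) ≤ (r:ℝ)*((r:ℝ)*ABS) := mul_nonneg hr0 (mul_nonneg hr0 hABS0)
    have t3 : (0:ℝ) ≤ (r:ℝ)*(|d| * |e'|) :=
      mul_nonneg hr0 (mul_nonneg (abs_nonneg _) (abs_nonneg _))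
    rw [hCAdef]
    linarith only [t1, t2, t3]
  set Rν : ℝ := Real.sqrt (CA/c) with hRν
  have hRν0 : (0:ℝ) ≤ Rν := Real.sqrt_nonneg _
  set K : ℝ := (r:ℝ)*CA + 2*((r:ℝ)*((r:ℝ)*(CB*(M*Rν)))) + 2*((r:ℝ)*((r:ℝ)*(M * |e'|)))
      + 2*((r:ℝ)*((r:ℝ)*(CB*(M*‖ν‖)))) + 4*((r:ℝ)*((r:ℝ)*ABS))
      + (r:ℝ)*((r:ℝ)*((r:ℝ)*CHI)) + 4*((r:ℝ)*(|d| * |e'|)) with hKdef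
  have hK0 : (0:ℝ) ≤ K := by
    have hr0 : (0:ℝ) ≤ (r:ℝ) := hrR.le
    have t1 : (0:ℝ) ≤ (r:ℝ)*CA := mul_nonneg hr0 hCA0
    have t2 : (0:ℝ) ≤ (r:ℝ)*((r:ℝ)*(CB*(M*Rν))) :=
      mul_nonneg hr0 (mul_nonneg hr0 (mul_nonneg hCB0 (mul_nonneg hM0 hRν0)))
    have t3 : (0:ℝ) ≤ (r:ℝ)*((r:ℝ)*(M * |e'|)) :=
      mul_nonneg hr0 (mul_nonneg hr0 (mul_nonneg hM0 (abs_nonneg _)))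
    have t4 : (0:ℝ) ≤ (r:ℝ)*((r:ℝ)*(CB*(M*‖ν‖))) :=
      mul_nonneg hr0 (mul_nonneg hr0 (mul_nonneg hCB0 (mul_nonneg hM0 (norm_nonneg _))))
    have t5 : (0:ℝ) ≤ (r:ℝ)*((r:ℝ)*ABS) := mul_nonneg hr0 (mul_nonneg hr0 hABS0)
    have t6 : (0:ℝ) ≤ (r:ℝ)*((r:ℝ)*((r:ℝ)*CHI)) :=
      mul_nonneg hr0 (mul_nonneg hr0 (mul_nonneg hr0 hCHI0))
    have t7 : (0:ℝ) ≤ (r:ℝ)*(|d| * |e'|) :=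
      mul_nonneg hr0 (mul_nonneg (abs_nonneg _) (abs_nonneg _))
    rw [hKdef]
    linarith only [t1, t2, t3, t4, t5, t6, t7]
  set Ky : ℝ := K/(2*ε) with hKy
  have hKy0 : (0:ℝ) ≤ Ky := div_nonneg hK0 (by linarith only [hε0])
  set Ka : ℝ := (r:ℝ)*(M*Ky) + (r:ℝ)*(CB*(M*Rν)) + (r:ℝ)*(M * |e'|)
      + (r:ℝ)*(CB*(M*‖ν‖)) + (r:ℝ)*ABS with hKa
  set Rξ : ℝ := Rν + |d| * ‖H‖ + Ky * ‖f‖ with hRξ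
  -- conclude by inclusion into a finite set
  refine Set.Finite.subset (Set.Finite.prod (Set.finite_Icc (1:ℤ) (r-1))
    (Set.Finite.prod (latFinA b Rξ) (ratFinA m hm Ka))) ?_
  rintro ⟨r₁, ξ₁, a₁⟩ ⟨hξ₁Λ, hint, h0, hlt, hslope, hbog1, hbog2, ⟨s, α⟩, hsαB, hwall⟩
  simp only at hξ₁Λ hint h0 hlt hslope hbog1 hbog2 hwall
  obtain ⟨hαf, hαH, hsd⟩ := hBsub (s, α) hsαB
  obtain ⟨hsM, hαM⟩ := hM (s, α) hsαB
  simp only at hαf hαH hsd hsM hαM hwall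
  -- real versions of ranks
  set R1 : ℝ := (r₁:ℝ) with hR1def
  have h1R1 : (1:ℝ) ≤ R1 := by
    have h' : (1:ℤ) ≤ r₁ := h0
    rw [hR1def]
    exact_mod_cast h'
  have hR1r : R1 ≤ (r:ℝ) - 1 := by
    rw [hR1def]
    have : (r₁:ℝ) + 1 ≤ (r:ℝ) := by exact_mod_cast hlt
    linarith only [this]
  have habsR1 : |R1| ≤ (r:ℝ) := by
    rw [abs_of_pos (by linarith only [h1R1])]
    linarith only [hR1r]
  have h1R2 : (1:ℝ) ≤ (r:ℝ) - R1 := by linarith only [hR1r]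
  have habsR2 : |(r:ℝ) - R1| ≤ (r:ℝ) := by
    rw [abs_of_pos (by linarith only [h1R2])]
    linarith only [h1R1]
  set A1 : ℝ := ((a₁:ℚ):ℝ) with hA1def
  set Ar : ℝ := ((a:ℚ):ℝ) with hArdef
  have habsAr : |Ar| ≤ ABS := by rw [hABS, hArdef]
  have habsCHI : |((χ:ℚ):ℝ)| ≤ CHI := by rw [hCHI]
  -- decomposition of ξ₁
  set x : ℝ := B ξ₁ f with hxdef
  set y : ℝ := B ξ₁ H with hydef
  set ν₁ : V := ξ₁ - x•H - y•f with hν₁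
  obtain ⟨hν₁f, hν₁H, hdec1⟩ := projLem B H f hBsymm hHH hff hHf ξ₁
  rw [← hxdef, ← hydef, ← hν₁] at hν₁f hν₁H hdec1
  set Q₁ : ℝ := B ν₁ ν₁ with hQ₁
  -- decomposition of ξ - ξ₁
  obtain ⟨hν₂f, hν₂H, hdec2⟩ := projLem B H f hBsymm hHH hff hHf (ξ - ξ₁)
  have hsubf : B (ξ - ξ₁) f = d - x := by simp [map_sub, LinearMap.sub_apply, hd, hxdef]
  have hsubH : B (ξ - ξ₁) H = e' - y := by simp [map_sub, LinearMap.sub_apply, he', hydef]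
  have hprojsub : (ξ - ξ₁) - (d - x)•H - (e' - y)•f = ν - ν₁ := by
    rw [hν, hν₁]
    module
  rw [hsubf, hsubH] at hν₂f hν₂H hdec2
  rw [hprojsub] at hν₂f hν₂H hdec2
  set Q₂ : ℝ := B (ν - ν₁) (ν - ν₁) with hQ₂
  -- sign facts on Q₁ Q₂
  have hQ₁c : Q₁ ≤ -c * ‖ν₁‖^2 := hcoer ν₁ hν₁f hν₁H
  have hQ₁0 : Q₁ ≤ 0 := by
    have := mul_nonneg hc0.le (sq_nonneg ‖ν₁‖)
    linarith only [this, hQ₁c]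
  have hQ₂c : Q₂ ≤ -c * ‖ν - ν₁‖^2 := hcoer (ν - ν₁) hν₂f hν₂H
  have hQ₂0 : Q₂ ≤ 0 := by
    have := mul_nonneg hc0.le (sq_nonneg ‖ν - ν₁‖)
    linarith only [this, hQ₂c]
  -- slope relation
  have hx : (r:ℝ)*x = R1*d := hslope
  have habsx : |x| ≤ |d| := by
    have h1 : |(r:ℝ)*x| = |R1*d| := by rw [hx]
    rw [abs_mul, abs_mul, abs_of_pos hrR] at h1
    have h2 : |R1| * |d| ≤ (r:ℝ) * |d| := mul_le_mul_of_nonneg_right habsR1 (abs_nonneg d)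
    have h3 : (r:ℝ) * |x| ≤ (r:ℝ) * |d| := by rw [h1]; exact h2
    exact le_of_mul_le_mul_left h3 hrR
  have habsdx : |d - x| ≤ 2 * |d| := by
    calc |d - x| ≤ |d| + |x| := abs_sub _ _
      _ ≤ 2 * |d| := by linarith only [habsx]
  -- rewrite Bogomolov inequalities
  rw [hdec1] at hbog1
  push_cast at hbog2
  rw [hdec2] at hbog2
  -- hbog1 : -(R1^2 * χ) ≤ 2*x*y + Q₁ - 2*R1*A1
  -- combination bound on Q₁, Q₂
  have h1c : 0 ≤ ((r:ℝ)-R1) * (2*x*y + Q₁ - 2*R1*A1 + R1^2*((χ:ℚ):ℝ)) := by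
    apply mul_nonneg (by linarith only [h1R2])
    linarith only [hbog1]
  have h2c : 0 ≤ R1 * (2*(d-x)*(e'-y) + Q₂ - 2*((r:ℝ)-R1)*(Ar-A1)
      + ((r:ℝ)-R1)^2*((χ:ℚ):ℝ)) := by
    apply mul_nonneg (by linarith only [h1R1])
    linarith only [hbog2]
  have hid0 : ((r:ℝ)-R1)*(2*x*y + Q₁ - 2*R1*A1 + R1^2*((χ:ℚ):ℝ))
      + R1*(2*(d-x)*(e'-y) + Q₂ - 2*((r:ℝ)-R1)*(Ar-A1) + ((r:ℝ)-R1)^2*((χ:ℚ):ℝ))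
      = ((r:ℝ)-R1)*Q₁ + R1*Q₂ + (R1*(((r:ℝ)-R1)*((r:ℝ)*((χ:ℚ):ℝ))))
        - 2*(R1*(((r:ℝ)-R1)*Ar)) + 2*(R1*((d-x)*e')) := by
    linear_combination (2*y)*hx
  have hb1 : |R1*(((r:ℝ)-R1)*((r:ℝ)*((χ:ℚ):ℝ)))| ≤ (r:ℝ)*((r:ℝ)*((r:ℝ)*CHI)) :=
    mulAbsB habsR1 (mulAbsB habsR2 (mulAbsB habsr habsCHI))
  have hb2 : |R1*(((r:ℝ)-R1)*Ar)| ≤ (r:ℝ)*((r:ℝ)*ABS) :=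
    mulAbsB habsR1 (mulAbsB habsR2 habsAr)
  have hb3 : |R1*((d-x)*e')| ≤ (r:ℝ)*((2 * |d|)*|e'|) :=
    mulAbsB habsR1 (mulAbsB habsdx (le_refl _))
  have hcomb : -CA ≤ ((r:ℝ)-R1)*Q₁ + R1*Q₂ := by
    have e1 := abs_le.mp hb1
    have e2 := abs_le.mp hb2
    have e3 := abs_le.mp hb3
    rw [hCAdef]
    linarith only [h1c, h2c, hid0, e1.1, e1.2, e2.1, e2.2, e3.1, e3.2]
  have hR1Q₂ : R1*Q₂ ≤ 0 :=
    mul_nonpos_iff.mpr (Or.inl ⟨by linarith only [h1R1], hQ₂0⟩)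
  have hR2Q₁ : ((r:ℝ)-R1)*Q₁ ≤ 0 :=
    mul_nonpos_iff.mpr (Or.inl ⟨by linarith only [h1R2], hQ₁0⟩)
  have hQ₁CA : -CA ≤ Q₁ := by
    have hz : ((r:ℝ)-R1-1)*Q₁ ≤ 0 :=
      mul_nonpos_iff.mpr (Or.inl ⟨by linarith only [h1R2], hQ₁0⟩)
    linarith only [hcomb, hR1Q₂, hz]
  have hQ₂CA : -CA ≤ Q₂ := by
    have hz : (R1-1)*Q₂ ≤ 0 :=
      mul_nonpos_iff.mpr (Or.inl ⟨by linarith only [h1R1], hQ₂0⟩)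
    linarith only [hcomb, hR2Q₁, hz]
  -- bound on ν₁
  have hν₁R : ‖ν₁‖ ≤ Rν := by
    have h1 : c*‖ν₁‖^2 ≤ CA := by linarith only [hQ₁c, hQ₁CA]
    have h2 : ‖ν₁‖^2 ≤ CA/c := (le_div_iff₀ hc0).mpr (by linarith only [h1])
    exact Real.le_sqrt_of_sq_le h2
  -- bounds on bilinear evaluations at α
  have habsS : |s| ≤ M := hsM
  have hBαν₁ : |B α ν₁| ≤ CB*(M*Rν) := by
    have h1 := hCBle α ν₁
    have h2 : CB*‖α‖*‖ν₁‖ ≤ CB*(M*Rν) := by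
      rw [mul_assoc]
      apply mul_le_mul_of_nonneg_left _ hCB0
      exact mul_le_mul hαM hν₁R (norm_nonneg _) hM0
    linarith
  have hBαν : |B α ν| ≤ CB*(M*‖ν‖) := by
    have h1 := hCBle α ν
    have h2 : CB*‖α‖*‖ν‖ ≤ CB*(M*‖ν‖) := by
      rw [mul_assoc]
      apply mul_le_mul_of_nonneg_left _ hCB0
      exact mul_le_mul_of_nonneg_right hαM (norm_nonneg _)
    linarith
  -- expand the wall equation
  have hαξ₁ : B α ξ₁ = B α ν₁ := by
    rw [hν₁]
    simp only [map_sub, map_smul, smul_eq_mul, hαH, hαf]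
    ring
  have hαξ : B α ξ = B α ν := by
    rw [hν]
    simp only [map_sub, map_smul, smul_eq_mul, hαH, hαf]
    ring
  have hHξ₁ : B H ξ₁ = y := hBsymm H ξ₁
  have hHξ : B H ξ = e' := hBsymm H ξ
  have hwall' : (r:ℝ)*(s*y) + (r:ℝ)*(B α ν₁) - R1*(s*e') - R1*(B α ν)
      = (r:ℝ)*A1 - R1*Ar := by
    rw [← hwall]
    simp only [map_add, map_sub, map_zsmul, map_smul, LinearMap.add_apply,
      LinearMap.sub_apply, LinearMap.smul_apply, smul_eq_mul, zsmul_eq_mul]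
    rw [hHξ₁, hHξ, hαξ₁, hαξ]
    push_cast
    ring
  -- first Y inequality
  have h1r : 0 ≤ (r:ℝ)*(2*x*y + Q₁ - 2*R1*A1 + R1^2*((χ:ℚ):ℝ)) := by
    apply mul_nonneg hrR.le
    linarith only [hbog1]
  have hid1 : (r:ℝ)*(2*x*y + Q₁ - 2*R1*A1 + R1^2*((χ:ℚ):ℝ))
      = 2*(R1*((d - (r:ℝ)*s)*y)) + (r:ℝ)*Q₁ - 2*(R1*((r:ℝ)*(B α ν₁)))
        + 2*(R1*(R1*(s*e'))) + 2*(R1*(R1*(B α ν))) - 2*(R1*(R1*Ar))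
        + (r:ℝ)*(R1^2*((χ:ℚ):ℝ)) := by
    linear_combination (2*y)*hx + 2*R1*hwall'
  have h2r : 0 ≤ (r:ℝ)*(2*(d-x)*(e'-y) + Q₂ - 2*((r:ℝ)-R1)*(Ar-A1)
      + ((r:ℝ)-R1)^2*((χ:ℚ):ℝ)) := by
    apply mul_nonneg hrR.le
    linarith only [hbog2]
  have hid2 : (r:ℝ)*(2*(d-x)*(e'-y) + Q₂ - 2*((r:ℝ)-R1)*(Ar-A1) + ((r:ℝ)-R1)^2*((χ:ℚ):ℝ))
      = 2*(((r:ℝ)-R1)*(((r:ℝ)*s - d)*y)) + (r:ℝ)*Q₂ + 2*((r:ℝ)*((d-x)*e'))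
        + 2*(((r:ℝ)-R1)*((r:ℝ)*(B α ν₁))) - 2*(((r:ℝ)-R1)*(R1*(s*e')))
        - 2*(((r:ℝ)-R1)*(R1*(B α ν))) + 2*(((r:ℝ)-R1)*(R1*Ar))
        - 2*(((r:ℝ)-R1)*((r:ℝ)*Ar)) + (r:ℝ)*(((r:ℝ)-R1)^2*((χ:ℚ):ℝ)) := by
    linear_combination (2*y)*hx - 2*((r:ℝ)-R1)*hwall'
  -- bounds for pieces
  have hsq1 : |R1^2| ≤ (r:ℝ)*(r:ℝ) := by
    rw [abs_pow, sq]
    exact mul_le_mul habsR1 habsR1 (abs_nonneg R1) hrR.le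
  have hsq2 : |((r:ℝ)-R1)^2| ≤ (r:ℝ)*(r:ℝ) := by
    rw [abs_pow, sq]
    exact mul_le_mul habsR2 habsR2 (abs_nonneg _) hrR.le
  have hp1 : |(r:ℝ)*Q₁| ≤ (r:ℝ)*CA := by
    apply mulAbsB habsr
    rw [abs_le]; exact ⟨hQ₁CA, by linarith⟩
  have hp2 : |(r:ℝ)*Q₂| ≤ (r:ℝ)*CA := by
    apply mulAbsB habsr
    rw [abs_le]; exact ⟨hQ₂CA, by linarith⟩
  have hp3 : |R1*((r:ℝ)*(B α ν₁))| ≤ (r:ℝ)*((r:ℝ)*(CB*(M*Rν))) :=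
    mulAbsB habsR1 (mulAbsB habsr hBαν₁)
  have hp3' : |((r:ℝ)-R1)*((r:ℝ)*(B α ν₁))| ≤ (r:ℝ)*((r:ℝ)*(CB*(M*Rν))) :=
    mulAbsB habsR2 (mulAbsB habsr hBαν₁)
  have hse' : |s*e'| ≤ M * |e'| := mulAbsB habsS (le_refl _)
  have hp4 : |R1*(R1*(s*e'))| ≤ (r:ℝ)*((r:ℝ)*(M * |e'|)) :=
    mulAbsB habsR1 (mulAbsB habsR1 hse')
  have hp4' : |((r:ℝ)-R1)*(R1*(s*e'))| ≤ (r:ℝ)*((r:ℝ)*(M * |e'|)) :=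
    mulAbsB habsR2 (mulAbsB habsR1 hse')
  have hp5 : |R1*(R1*(B α ν))| ≤ (r:ℝ)*((r:ℝ)*(CB*(M*‖ν‖))) :=
    mulAbsB habsR1 (mulAbsB habsR1 hBαν)
  have hp5' : |((r:ℝ)-R1)*(R1*(B α ν))| ≤ (r:ℝ)*((r:ℝ)*(CB*(M*‖ν‖))) :=
    mulAbsB habsR2 (mulAbsB habsR1 hBαν)
  have hp6 : |R1*(R1*Ar)| ≤ (r:ℝ)*((r:ℝ)*ABS) := mulAbsB habsR1 (mulAbsB habsR1 habsAr)
  have hp6' : |((r:ℝ)-R1)*(R1*Ar)| ≤ (r:ℝ)*((r:ℝ)*ABS) :=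
    mulAbsB habsR2 (mulAbsB habsR1 habsAr)
  have hp6'' : |((r:ℝ)-R1)*((r:ℝ)*Ar)| ≤ (r:ℝ)*((r:ℝ)*ABS) :=
    mulAbsB habsR2 (mulAbsB habsr habsAr)
  have hp7 : |(r:ℝ)*(R1^2*((χ:ℚ):ℝ))| ≤ (r:ℝ)*(((r:ℝ)*(r:ℝ))*CHI) :=
    mulAbsB habsr (mulAbsB hsq1 habsCHI)
  have hp7' : |(r:ℝ)*(((r:ℝ)-R1)^2*((χ:ℚ):ℝ))| ≤ (r:ℝ)*(((r:ℝ)*(r:ℝ))*CHI) :=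
    mulAbsB habsr (mulAbsB hsq2 habsCHI)
  have hp8 : |(r:ℝ)*((d-x)*e')| ≤ (r:ℝ)*((2 * |d|)*|e'|) :=
    mulAbsB habsr (mulAbsB habsdx (le_refl _))
  -- the two Y inequalities
  have hY1 : -K ≤ 2*(R1*((d - (r:ℝ)*s)*y)) := by
    have e1 := abs_le.mp hp1
    have e3 := abs_le.mp hp3
    have e4 := abs_le.mp hp4
    have e5 := abs_le.mp hp5
    have e6 := abs_le.mp hp6
    have e7 := abs_le.mp hp7
    have ex : (0:ℝ) ≤ (r:ℝ)*((2 * |d|)*|e'|) := (abs_nonneg _).trans hp8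
    have exA : (0:ℝ) ≤ (r:ℝ)*((r:ℝ)*ABS) :=
      mul_nonneg hrR.le (mul_nonneg hrR.le hABS0)
    rw [hKdef]
    linarith only [h1r, hid1, e1.1, e1.2, e3.1, e3.2, e4.1, e4.2, e5.1, e5.2,
      e6.1, e6.2, e7.1, e7.2, ex, exA]
  have hY2 : -K ≤ 2*(((r:ℝ)-R1)*(((r:ℝ)*s - d)*y)) := by
    have e1 := abs_le.mp hp2
    have e3 := abs_le.mp hp3'
    have e4 := abs_le.mp hp4'
    have e5 := abs_le.mp hp5'
    have e6 := abs_le.mp hp6'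
    have e6' := abs_le.mp hp6''
    have e7 := abs_le.mp hp7'
    have e8 := abs_le.mp hp8
    rw [hKdef]
    linarith only [h2r, hid2, e1.1, e1.2, e3.1, e3.2, e4.1, e4.2, e5.1, e5.2,
      e6.1, e6.2, e6'.1, e6'.2, e7.1, e7.2, e8.1, e8.2]
  -- bound on y
  have hεw : ε ≤ |(r:ℝ)*s - d| := hεle (s, α) hsαB
  have hyK : |y| ≤ Ky := by
    rw [hKy]
    rcases (sub_ne_zero.mpr hsd).lt_or_gt with hc | hc
    · -- r*s - d < 0, so d - r*s > 0
      have hdp : 0 < d - (r:ℝ)*s := by linarith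
      have hεd : ε ≤ d - (r:ℝ)*s := by
        rw [abs_of_neg hc] at hεw; linarith only [hεw]
      have hprod1 : (0:ℝ) ≤ (R1 - 1)*(d - (r:ℝ)*s) :=
        mul_nonneg (by linarith only [h1R1]) (by linarith only [hεd, hε0])
      have hprod2 : ((r:ℝ)-R1-1)*((r:ℝ)*s - d) ≤ 0 :=
        mul_nonpos_iff.mpr (Or.inl ⟨by linarith only [h1R2], by linarith only [hεd, hε0]⟩)
      refine ybnd hε0 hK0 (A1c := 2*(R1*(d - (r:ℝ)*s)))
        (A2c := 2*(((r:ℝ)-R1)*((r:ℝ)*s - d))) ?_ ?_ ?_ ?_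
      · linarith only [hY1]
      · linarith only [hY2]
      · linarith only [hprod1, hεd]
      · linarith only [hprod2, hεd]
    · -- r*s - d > 0
      have hεd : ε ≤ (r:ℝ)*s - d := by
        rw [abs_of_pos hc] at hεw; linarith only [hεw]
      have hprod1 : (0:ℝ) ≤ ((r:ℝ)-R1-1)*((r:ℝ)*s - d) :=
        mul_nonneg (by linarith only [h1R2]) (by linarith only [hεd, hε0])
      have hprod2 : (R1 - 1)*(d - (r:ℝ)*s) ≤ 0 :=
        mul_nonpos_iff.mpr (Or.inl ⟨by linarith only [h1R1], by linarith only [hεd, hε0]⟩)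
      refine ybnd hε0 hK0 (A1c := 2*(((r:ℝ)-R1)*((r:ℝ)*s - d)))
        (A2c := 2*(R1*(d - (r:ℝ)*s))) ?_ ?_ ?_ ?_
      · linarith only [hY2]
      · linarith only [hY1]
      · linarith only [hprod1, hεd]
      · linarith only [hprod2, hεd]
  -- bound on ‖ξ₁‖
  have hξ₁n : ‖ξ₁‖ ≤ Rξ := by
    have hrepr : ξ₁ = ν₁ + (x•H + y•f) := by rw [hν₁]; module
    rw [hrepr]
    calc ‖ν₁ + (x•H + y•f)‖ ≤ ‖ν₁‖ + ‖x•H + y•f‖ := norm_add_le _ _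
      _ ≤ ‖ν₁‖ + (‖x•H‖ + ‖y•f‖) := by linarith only [norm_add_le (x•H) (y•f)]
      _ = ‖ν₁‖ + (|x| * ‖H‖ + |y| * ‖f‖) := by rw [norm_smul, norm_smul, Real.norm_eq_abs,
            Real.norm_eq_abs]
      _ ≤ Rν + (|d| * ‖H‖ + Ky * ‖f‖) := by
          have g1 : |x| * ‖H‖ ≤ |d| * ‖H‖ := mul_le_mul_of_nonneg_right habsx (norm_nonneg _)
          have g2 : |y| * ‖f‖ ≤ Ky * ‖f‖ := mul_le_mul_of_nonneg_right hyK (norm_nonneg _)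
          linarith only [g1, g2, hν₁R]
      _ = Rξ := by rw [hRξ]; ring
  -- bound on a₁
  have hA1K : |A1| ≤ Ka := by
    have h5 : (r:ℝ)*A1 = (r:ℝ)*(s*y) + (r:ℝ)*(B α ν₁) - R1*(s*e') - R1*(B α ν)
        + R1*Ar := by linarith only [hwall']
    have hq1 : |(r:ℝ)*(s*y)| ≤ (r:ℝ)*(M*Ky) := mulAbsB habsr (mulAbsB habsS hyK)
    have hq2 : |(r:ℝ)*(B α ν₁)| ≤ (r:ℝ)*(CB*(M*Rν)) := mulAbsB habsr hBαν₁
    have hq3 : |R1*(s*e')| ≤ (r:ℝ)*(M * |e'|) := mulAbsB habsR1 hse'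
    have hq4 : |R1*(B α ν)| ≤ (r:ℝ)*(CB*(M*‖ν‖)) := mulAbsB habsR1 hBαν
    have hq5 : |R1*Ar| ≤ (r:ℝ)*ABS := mulAbsB habsR1 habsAr
    have hrA1 : |(r:ℝ)*A1| ≤ Ka := by
      rw [abs_le]
      have f1 := abs_le.mp hq1
      have f2 := abs_le.mp hq2
      have f3 := abs_le.mp hq3
      have f4 := abs_le.mp hq4
      have f5 := abs_le.mp hq5
      rw [hKa]
      constructor <;>
        linarith only [h5, f1.1, f1.2, f2.1, f2.2, f3.1, f3.2, f4.1, f4.2, f5.1, f5.2]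
    have : |(r:ℝ)*A1| = (r:ℝ)*|A1| := by
      rw [abs_mul, abs_of_pos hrR]
    rw [this] at hrA1
    have hr1 : (1:ℝ) ≤ (r:ℝ) := by exact_mod_cast hr
    have := mul_nonneg (by linarith only [hr1] : (0:ℝ) ≤ (r:ℝ) - 1) (abs_nonneg A1)
    linarith only [this, hrA1]
  -- final membership
  refine ⟨?_, ⟨?_, hξ₁Λ⟩, ?_⟩
  · simp only [Set.mem_Icc]
    omega
  · rw [Metric.mem_closedBall, dist_zero_right]
    exact hξ₁n
  · exact ⟨hA1K, hint⟩
end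

section
/- Let v = (r, ξ, a) and v₁ = (r₁, ξ₁, a₁) be elements of the Mukai lattice satisfying the wall proportionality r₁·(ξ·f) = r·(ξ₁·f). Then u := r₁·v − r·v₁ is isotropic, i.e. ⟨u, u⟩ = 0. In particular, if v and v₁ lie in the integral Mukai lattice ℤ ⊕ (ℤσ ⊕ ℤf) ⊕ ℤ and r·v₁ ≠ r₁·v, then the lattice L := (ℚv + ℚv₁) ∩ (ℤ ⊕ (ℤσ ⊕ ℤf) ⊕ ℤ) contains a nonzero isotropic Mukai vector. (This is the paper's Lemma that for an elliptic K3 surface with NS(X) = ℤσ + ℤf, the lattice associated to any wall contains an isotropic Mukai vector.) -/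
/-- For an elliptic K3 surface with `NS(X) = ℤσ + ℤf` (so `V = ℚσ ⊕ ℚf` with
`(σ²) = −2`, `(σ·f) = 1`, `(f²) = 0`): if `v = (r, ξ, a)` and
`v₁ = (r₁, ξ₁, a₁)` satisfy the wall proportionality `r₁(ξ·f) = r(ξ₁·f)`,
then `u := r₁v − rv₁` is isotropic; in particular, if `v, v₁` are integral and
`rv₁ ≠ r₁v`, then `L = (ℚv + ℚv₁) ∩ (ℤ ⊕ (ℤσ ⊕ ℤf) ⊕ ℤ)` contains a nonzero
isotropic Mukai vector. -/
theorem stmt12 {V : Type*} [AddCommGroup V] [Module ℚ V]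
    (B : V →ₗ[ℚ] V →ₗ[ℚ] ℚ)
    (σ f : V)
    (hσσ : B σ σ = -2) (hσf : B σ f = 1) (hfσ : B f σ = 1) (hff : B f f = 0)
    (hspan : ∀ x : V, ∃ p q : ℚ, x = p • σ + q • f)
    (r a r₁ a₁ : ℚ) (ξ ξ₁ : V)
    (hwall : r₁ * B ξ f = r * B ξ₁ f) :
    let pair : ℚ × V × ℚ → ℚ × V × ℚ → ℚ :=
      fun u w => B u.2.1 w.2.1 - u.1 * w.2.2 - u.2.2 * w.1
    let v : ℚ × V × ℚ := (r, ξ, a)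
    let v₁ : ℚ × V × ℚ := (r₁, ξ₁, a₁)
    let u : ℚ × V × ℚ := r₁ • v - r • v₁
    let integral : ℚ × V × ℚ → Prop := fun w =>
      (∃ z : ℤ, w.1 = (z : ℚ)) ∧
      (∃ p q : ℤ, w.2.1 = (p : ℚ) • σ + (q : ℚ) • f) ∧
      (∃ z : ℤ, w.2.2 = (z : ℚ))
    (pair u u = 0 ∧
     (integral v → integral v₁ → r • v₁ ≠ r₁ • v →
       ∃ w : ℚ × V × ℚ, (∃ p q : ℚ, w = p • v + q • v₁) ∧
         integral w ∧ w ≠ 0 ∧ pair w w = 0)) := by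

  intro pair v v₁ u integral
  obtain ⟨p, q, hξ⟩ := hspan ξ
  obtain ⟨p₁, q₁, hξ₁⟩ := hspan ξ₁
  have hBf : B ξ f = p := by simp [hξ, hσf, hff]
  have hBf₁ : B ξ₁ f = p₁ := by simp [hξ₁, hσf, hff]
  have h : r₁ * p = r * p₁ := by rw [← hBf, ← hBf₁]; exact hwall
  have hη : r₁ • ξ - r • ξ₁ = (r₁ * q - r * q₁) • f := by
    rw [hξ, hξ₁]
    match_scalars
    · linarith
    · ring
  have hu1 : u.1 = 0 := by simp [u, v, v₁]; ring
  have hu2 : u.2.1 = r₁ • ξ - r • ξ₁ := by simp [u, v, v₁]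
  have hkey : pair u u = 0 := by
    simp only [pair, hu1, hu2, hη, map_smul, LinearMap.smul_apply, hff,
      smul_eq_mul]
    ring
  refine ⟨hkey, fun hv hv₁ hne => ⟨u, ⟨r₁, -r, by
      simp [u, sub_eq_add_neg, neg_smul]⟩, ?_, ?_, hkey⟩⟩
  · obtain ⟨⟨z, hz⟩, ⟨P, Q, hPQ⟩, ⟨w, hw⟩⟩ := hv
    obtain ⟨⟨z₁, hz₁⟩, ⟨P₁, Q₁, hPQ₁⟩, ⟨w₁, hw₁⟩⟩ := hv₁
    simp only [v, v₁] at hz hPQ hw hz₁ hPQ₁ hw₁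
    refine ⟨⟨0, by simpa using hu1⟩, ⟨z₁ * P - z * P₁, z₁ * Q - z * Q₁, ?_⟩,
      ⟨z₁ * w - z * w₁, ?_⟩⟩
    · rw [hu2, hPQ, hPQ₁]
      rw [show r = (z:ℚ) from hz, show r₁ = (z₁:ℚ) from hz₁]
      push_cast
      match_scalars <;> ring
    · have : u.2.2 = r₁ * a - r * a₁ := by simp [u, v, v₁]
      rw [this, hz, hz₁, hw, hw₁]; push_cast; ring
  · exact sub_ne_zero_of_ne (Ne.symm hne)
end
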